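/- arXiv:1910.04902 — 8 statements merged into one kernel-verified Lean document; each statement's English description precedes it below -/
import Mathlib

section
/- Let $(\alpha_n)_{n\geq 1}$ be a sequence of reals with $0 < c < \alpha_n < c'$ for all $n$, and define $\beta_k^n = \alpha_k \alpha_{k+1} \cdots \alpha_{k+n-1}$ and $d_n = \inf_{k\geq 1}\beta_k^n$. If $\sup_{k\geq 1}\sum_{n=1}^\infty (\beta_k^n)^{-1} < \infty$, then $\limsup_{n\to\infty}(d_n)^{-1/n} < 1$. -/
open Filter Finset

/-- `beta α k n = α_k ⋯ α_{k+n-1}`. -/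
noncomputable def beta (α : ℕ → ℝ) (k n : ℕ) : ℝ := ∏ j ∈ Finset.range n, α (k + j)

/-- `d_n = inf_k β_k^n`. -/
noncomputable def dseq (α : ℕ → ℝ) (n : ℕ) : ℝ := ⨅ k, beta α k n

theorem stmt0 (c c' : ℝ) (α : ℕ → ℝ) (hc : 0 < c) (hcc : c < c')
    (hα : ∀ n, α n ∈ Set.Ioo c c')
    (hsum : ∀ k, Summable fun n => (beta α k (n + 1))⁻¹)
    (M : ℝ) (hM : ∀ k, (∑' n, (beta α k (n + 1))⁻¹) ≤ M) :
    Filter.limsup (fun n : ℕ => (dseq α n)⁻¹ ^ ((n : ℝ)⁻¹)) Filter.atTop < 1 := by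
  have hαpos : ∀ n, 0 < α n := fun n => hc.trans (hα n).1
  have hβpos : ∀ k n, 0 < beta α k n := fun k n =>
    Finset.prod_pos fun j _ => hαpos _
  -- split formula
  have hsplit : ∀ k a b, beta α k (a + b) = beta α k a * beta α (k + a) b := by
    intro k a b
    simp only [beta, Finset.prod_range_add]
    congr 1
    exact Finset.prod_congr rfl fun j _ => by rw [add_assoc]
  have hMpos : 0 < M := by
    have h1 : (beta α 0 1)⁻¹ ≤ ∑' n, (beta α 0 (n + 1))⁻¹ :=
      (hsum 0).le_tsum 0 fun m _ => inv_nonneg.mpr (hβpos _ _).le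
    have : 0 < ∑' n, (beta α 0 (n + 1))⁻¹ :=
      lt_of_lt_of_le (inv_pos.mpr (hβpos 0 1)) h1
    linarith [hM 0]
  set θ : ℝ := M / (M + 1) with hθdef
  have hθpos : 0 < θ := by positivity
  have hθlt : θ < 1 := by
    rw [hθdef, div_lt_one (by linarith)]; linarith
  -- tails
  set T : ℕ → ℕ → ℝ := fun k n => ∑' m, (beta α k (n + m + 1))⁻¹ with hT
  have hsummT : ∀ k n, Summable fun m => (beta α k (n + m + 1))⁻¹ := by
    intro k n
    have := (summable_nat_add_iff n).mpr (hsum k)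
    refine this.congr fun m => ?_
    simp only [add_comm m n]
  have hT0 : ∀ k, T k 0 ≤ M := by
    intro k
    have : T k 0 = ∑' n, (beta α k (n + 1))⁻¹ := by
      simp only [hT, zero_add]
    rw [this]; exact hM k
  have hTnonneg : ∀ k n, 0 ≤ T k n := fun k n =>
    tsum_nonneg fun m => inv_nonneg.mpr (hβpos _ _).le
  have hterm_le : ∀ k n, (beta α k (n + 1))⁻¹ ≤ T k n := by
    intro k n
    have := (hsummT k n).le_tsum 0 fun m _ => inv_nonneg.mpr (hβpos _ _).le
    simpa using this
  have hTsucc : ∀ k n, T k (n + 1) ≤ (beta α k (n + 1))⁻¹ * M := by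
    intro k n
    have heq : T k (n + 1) = (beta α k (n + 1))⁻¹ * ∑' m, (beta α (k + (n + 1)) (m + 1))⁻¹ := by
      rw [hT]
      simp only
      rw [← tsum_mul_left]
      refine tsum_congr fun m => ?_
      have : n + 1 + m + 1 = (n + 1) + (m + 1) := by ring
      rw [this, hsplit, mul_inv]
    rw [heq]
    exact mul_le_mul_of_nonneg_left (hM _) (inv_nonneg.mpr (hβpos _ _).le)
  have hTrec : ∀ k n, T k n = (beta α k (n + 1))⁻¹ + T k (n + 1) := by
    intro k n
    rw [hT]
    simp only
    rw [(hsummT k n).tsum_eq_zero_add]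
    congr 1
    refine tsum_congr fun m => ?_
    congr 1
    ring
  have hTgeo : ∀ k n, T k (n + 1) ≤ θ * T k n := by
    intro k n
    have h1 := hTsucc k n
    have h2 := hTrec k n
    have h3 : (M + 1) * T k (n + 1) ≤ M * T k n := by nlinarith [hterm_le k n]
    rw [hθdef, div_mul_eq_mul_div, le_div_iff₀ (by linarith)]
    linarith
  have hTpow : ∀ k n, T k n ≤ M * θ ^ n := by
    intro k n
    induction n with
    | zero => simpa using hT0 k
    | succ n ih =>
      calc T k (n + 1) ≤ θ * T k n := hTgeo k n
        _ ≤ θ * (M * θ ^ n) := by nlinarith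
        _ = M * θ ^ (n + 1) := by ring
  have hkey : ∀ k n, (beta α k (n + 1))⁻¹ ≤ M * θ ^ n :=
    fun k n => (hterm_le k n).trans (hTpow k n)
  -- lower bound for dseq
  have hdseq : ∀ n, (M * θ ^ n)⁻¹ ≤ dseq α (n + 1) := by
    intro n
    refine le_ciInf fun k => ?_
    have h := hkey k n
    have := inv_anti₀ (inv_pos.mpr (hβpos k (n+1))) h
    rwa [inv_inv] at this
  have hdpos : ∀ n, 0 < dseq α (n + 1) := fun n =>
    lt_of_lt_of_le (by positivity) (hdseq n)
  have hdinv : ∀ n, (dseq α (n + 1))⁻¹ ≤ M * θ ^ n := by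
    intro n
    have := inv_anti₀ (by positivity : (0:ℝ) < (M * θ ^ n)⁻¹) (hdseq n)
    rwa [inv_inv] at this
  have hdnonneg : ∀ n, 0 ≤ dseq α n := fun n =>
    le_ciInf fun k => (hβpos k n).le
  -- choose θ' ∈ (θ, 1)
  set θ' : ℝ := (θ + 1) / 2 with hθ'def
  have hθ'pos : 0 < θ' := by positivity
  have hθθ' : θ < θ' := by rw [hθ'def]; linarith
  have hθ'lt : θ' < 1 := by rw [hθ'def]; linarith
  -- eventually M * θ^n ≤ θ'^(n+1)
  have hratio : Tendsto (fun n : ℕ => (M / θ') * (θ / θ') ^ n) atTop (nhds 0) := by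
    have h := tendsto_pow_atTop_nhds_zero_of_lt_one
      (le_of_lt (by positivity : (0:ℝ) < θ / θ'))
      ((div_lt_one hθ'pos).mpr hθθ')
    simpa using h.const_mul (M / θ')
  have hev : ∀ᶠ n : ℕ in atTop, M * θ ^ n ≤ θ' ^ (n + 1) := by
    filter_upwards [hratio.eventually_le_const (by norm_num : (0:ℝ) < 1)] with n hn
    have hθ'ne : θ' ≠ 0 := ne_of_gt hθ'pos
    have : M * θ ^ n = ((M / θ') * (θ / θ') ^ n) * θ' ^ (n + 1) := by
      field_simp
      rw [pow_succ, ← mul_assoc, ← mul_pow, div_mul_cancel₀ _ hθ'ne]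
    rw [this]
    nlinarith [pow_pos hθ'pos (n + 1), hn]
  -- the final bound on the limsup
  have hfnonneg : ∀ n : ℕ, 0 ≤ (dseq α n)⁻¹ ^ ((n : ℝ)⁻¹) := fun n =>
    Real.rpow_nonneg (inv_nonneg.mpr (hdnonneg n)) _
  have hevf : ∀ᶠ n : ℕ in atTop, (dseq α n)⁻¹ ^ ((n : ℝ)⁻¹) ≤ θ' := by
    have hev' : ∀ᶠ n : ℕ in atTop, M * θ ^ (n - 1) ≤ θ' ^ n ∧ 1 ≤ n := by
      filter_upwards [(tendsto_sub_atTop_nat 1).eventually hev, eventually_ge_atTop 1] with n h1 h2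
      refine ⟨?_, h2⟩
      have : n - 1 + 1 = n := Nat.succ_pred_eq_of_pos h2
      simpa [Function.comp, this] using h1
    filter_upwards [hev'] with n hn
    obtain ⟨hb, h1⟩ := hn
    obtain ⟨m, rfl⟩ := Nat.exists_eq_add_of_le h1
    have hd : (dseq α (1 + m))⁻¹ ≤ θ' ^ (1 + m) := by
      have := hdinv m
      rw [add_comm 1 m]
      refine this.trans ?_
      simpa [add_comm 1 m] using hb
    have hnn : (0:ℝ) ≤ (dseq α (1 + m))⁻¹ := by
      have := hdpos m
      rw [add_comm 1 m]
      positivity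
    calc (dseq α (1 + m))⁻¹ ^ (((1 + m : ℕ) : ℝ))⁻¹
        ≤ (θ' ^ (1 + m)) ^ (((1 + m : ℕ) : ℝ))⁻¹ :=
          Real.rpow_le_rpow hnn hd (by positivity)
      _ = θ' := by
          rw [← Real.rpow_natCast θ' (1 + m), ← Real.rpow_mul hθ'pos.le,
            mul_inv_cancel₀ (by positivity), Real.rpow_one]
  have hflim : Filter.limsup (fun n : ℕ => (dseq α n)⁻¹ ^ ((n : ℝ)⁻¹)) Filter.atTop ≤ θ' :=
    Filter.limsup_le_of_le (isCoboundedUnder_le_of_le atTop hfnonneg) hevf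
  exact lt_of_le_of_lt hflim hθ'lt
end

section
/- Let $(\alpha_n)_{n\geq 1}$ be a sequence with $\alpha_n \in (c, c')$, $0 < c < c'$, $\beta_k^n = \alpha_k\cdots\alpha_{k+n-1}$, and $d_n = \inf_{k\geq 1}\beta_k^n$. Then the following are equivalent: (i) $\lim_{n\to\infty}(d_n)^{-1/n} < 1$; (ii) $\sum_{n=1}^\infty (d_n)^{-1} < \infty$; (iii) $\sup_{k\geq 1}\sum_{n=1}^\infty(\beta_k^n)^{-1} < \infty$. -/
open Filter Finset

section aux

variable {c c' : ℝ} {α : ℕ → ℝ}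

lemma beta_lb (hc : 0 < c) (hα : ∀ n, c < α n) (k n : ℕ) : c ^ n ≤ beta α k n := by
  have : c ^ n = ∏ _j ∈ Finset.range n, c := by
    rw [Finset.prod_const, Finset.card_range]
  rw [this, beta]
  exact Finset.prod_le_prod (fun i _ => hc.le) (fun i _ => (hα _).le)

lemma beta_pos (hc : 0 < c) (hα : ∀ n, c < α n) (k n : ℕ) : 0 < beta α k n :=
  lt_of_lt_of_le (pow_pos hc n) (beta_lb hc hα k n)

lemma beta_ub (hc : 0 < c) (hα : ∀ n, c < α n) (hα' : ∀ n, α n < c') (k n : ℕ) :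
    beta α k n ≤ c' ^ n := by
  have : c' ^ n = ∏ _j ∈ Finset.range n, c' := by
    rw [Finset.prod_const, Finset.card_range]
  rw [this, beta]
  exact Finset.prod_le_prod (fun i _ => (hc.trans (hα _)).le) (fun i _ => (hα' _).le)

lemma beta_add (k m n : ℕ) : beta α k (m + n) = beta α k m * beta α (k + m) n := by
  rw [beta, Finset.prod_range_add]
  simp [beta, add_assoc]

lemma beta_bdd (hc : 0 < c) (hα : ∀ n, c < α n) (n : ℕ) :
    BddBelow (Set.range fun k => beta α k n) :=
  ⟨c ^ n, by rintro x ⟨k, rfl⟩; exact beta_lb hc hα k n⟩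

lemma dseq_le_beta (hc : 0 < c) (hα : ∀ n, c < α n) (k n : ℕ) : dseq α n ≤ beta α k n :=
  ciInf_le (beta_bdd hc hα n) k

lemma dseq_lb (hc : 0 < c) (hα : ∀ n, c < α n) (n : ℕ) : c ^ n ≤ dseq α n :=
  le_ciInf fun k => beta_lb hc hα k n

lemma dseq_pos (hc : 0 < c) (hα : ∀ n, c < α n) (n : ℕ) : 0 < dseq α n :=
  lt_of_lt_of_le (pow_pos hc n) (dseq_lb hc hα n)

lemma dseq_ub (hc : 0 < c) (hα : ∀ n, c < α n) (hα' : ∀ n, α n < c') (n : ℕ) :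
    dseq α n ≤ c' ^ n :=
  (dseq_le_beta hc hα 0 n).trans (beta_ub hc hα hα' 0 n)

lemma dseq_mul (hc : 0 < c) (hα : ∀ n, c < α n) (m n : ℕ) :
    dseq α m * dseq α n ≤ dseq α (m + n) :=
  le_ciInf fun k => by
    rw [beta_add]
    exact mul_le_mul (dseq_le_beta hc hα k m) (dseq_le_beta hc hα (k + m) n)
      (dseq_pos hc hα n).le (beta_pos hc hα k m).le

end aux

theorem stmt1 (c c' : ℝ) (α : ℕ → ℝ) (hc : 0 < c) (hcc : c < c')
    (hα : ∀ n, α n ∈ Set.Ioo c c') :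
    List.TFAE
      [ ∃ L < (1 : ℝ), Filter.Tendsto
          (fun n : ℕ => (dseq α n)⁻¹ ^ ((n : ℝ)⁻¹)) Filter.atTop (nhds L),
        Summable fun n => (dseq α (n + 1))⁻¹,
        (∀ k, Summable fun n => (beta α k (n + 1))⁻¹) ∧
          ∃ M : ℝ, ∀ k, (∑' n, (beta α k (n + 1))⁻¹) ≤ M ] := by
  have hαl : ∀ n, c < α n := fun n => (hα n).1
  have hαu : ∀ n, α n < c' := fun n => (hα n).2
  have hdpos : ∀ n, 0 < dseq α n := dseq_pos hc hαl
  have hbpos : ∀ k n, 0 < beta α k n := beta_pos hc hαl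
  tfae_have 1 → 2 := by
    rintro ⟨L, hL1, hL⟩
    have hL0 : 0 ≤ L :=
      ge_of_tendsto' hL fun n => Real.rpow_nonneg (inv_nonneg.2 (hdpos n).le) _
    set r : ℝ := (L + 1) / 2 with hr
    have hr0 : 0 ≤ r := by positivity
    have hLr : L < r := by rw [hr]; linarith
    have hr1 : r < 1 := by rw [hr]; linarith
    have hev : ∀ᶠ n : ℕ in atTop, (dseq α n)⁻¹ ^ ((n : ℝ)⁻¹) < r :=
      hL.eventually (gt_mem_nhds hLr)
    obtain ⟨N, hN⟩ := eventually_atTop.mp hev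
    set K := max N 1 with hK
    have key : ∀ n, K ≤ n → (dseq α n)⁻¹ ≤ r ^ n := by
      intro n hn
      have hn1 : n ≠ 0 := by omega
      have hx : (dseq α n)⁻¹ ^ ((n : ℝ)⁻¹) < r := hN n (le_trans (le_max_left _ _) hn)
      have hxe : (dseq α n)⁻¹ = ((dseq α n)⁻¹ ^ ((n : ℝ)⁻¹)) ^ n :=
        (Real.rpow_inv_natCast_pow (inv_nonneg.2 (hdpos n).le) hn1).symm
      rw [hxe]
      exact pow_le_pow_left₀ (Real.rpow_nonneg (inv_nonneg.2 (hdpos n).le) _) hx.le n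
    rw [← summable_nat_add_iff K]
    have hgeo : Summable fun n : ℕ => r ^ (n + K + 1) := by
      have : ∀ n : ℕ, r ^ (n + K + 1) = r ^ n * r ^ (K + 1) := fun n => by
        rw [← pow_add]; ring_nf
      simp_rw [this]
      exact (summable_geometric_of_lt_one hr0 hr1).mul_right _
    exact Summable.of_nonneg_of_le (fun n => inv_nonneg.2 (hdpos _).le)
      (fun n => key (n + K + 1) (by omega)) hgeo
  tfae_have 2 → 3 := by
    intro h2
    have hle : ∀ k n, (beta α k (n + 1))⁻¹ ≤ (dseq α (n + 1))⁻¹ := fun k n =>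
      inv_anti₀ (hdpos _) (dseq_le_beta hc hαl k _)
    have hsum : ∀ k, Summable fun n => (beta α k (n + 1))⁻¹ := fun k =>
      Summable.of_nonneg_of_le (fun n => inv_nonneg.2 (hbpos _ _).le) (hle k) h2
    exact ⟨hsum, ∑' n, (dseq α (n + 1))⁻¹, fun k =>
      Summable.tsum_le_tsum (hle k) (hsum k) h2⟩
  tfae_have 3 → 1 := by
    rintro ⟨hsum, M, hM⟩
    have hnn : ∀ (k : ℕ) (n : ℕ), 0 ≤ (beta α k (n + 1))⁻¹ := fun k n =>
      inv_nonneg.2 (hbpos _ _).le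
    have hterm : ∀ k n, (beta α k (n + 1))⁻¹ ≤ M := fun k n =>
      (Summable.le_tsum (hsum k) n fun j _ => hnn k j).trans (hM k)
    have hM0 : 0 < M := lt_of_lt_of_le (inv_pos.2 (hbpos 0 1)) (hterm 0 0)
    -- partial sums bound
    have hpart : ∀ k N, ∑ m ∈ Finset.range N, (beta α k m)⁻¹ ≤ 1 + M := by
      intro k N
      cases N with
      | zero => simp; linarith
      | succ N =>
        rw [Finset.sum_range_succ']
        have h0 : (beta α k 0)⁻¹ = 1 := by simp [beta]
        have h1 : ∑ m ∈ Finset.range N, (beta α k (m + 1))⁻¹ ≤ M :=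
          (Summable.sum_le_tsum (Finset.range N) (fun i _ => hnn k i) (hsum k)).trans (hM k)
        rw [h0]; linarith
    -- key bound
    have hkey : ∀ (N : ℕ) (k : ℕ), (N : ℝ) * (beta α k N)⁻¹ ≤ (1 + M) * M := by
      intro N k
      calc (N : ℝ) * (beta α k N)⁻¹
          = ∑ _m ∈ Finset.range N, (beta α k N)⁻¹ := by
            rw [Finset.sum_const, Finset.card_range, nsmul_eq_mul]
        _ ≤ ∑ m ∈ Finset.range N, (beta α k m)⁻¹ * M := by
            apply Finset.sum_le_sum
            intro m hm
            have hmN : m < N := Finset.mem_range.mp hm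
            have hsplit : beta α k N = beta α k m * beta α (k + m) (N - m) := by
              rw [← beta_add]; congr 1; omega
            rw [hsplit, mul_inv]
            have h2 : (beta α (k + m) (N - m))⁻¹ ≤ M := by
              have he : N - m = (N - m - 1) + 1 := by omega
              rw [he]; exact hterm _ _
            exact mul_le_mul_of_nonneg_left h2 (inv_nonneg.2 (hbpos k m).le)
        _ = (∑ m ∈ Finset.range N, (beta α k m)⁻¹) * M := by rw [← Finset.sum_mul]
        _ ≤ (1 + M) * M := mul_le_mul_of_nonneg_right (hpart k N) hM0.le
    -- subadditive sequence
    set u : ℕ → ℝ := fun n => Real.log (dseq α n)⁻¹ with hu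
    have hsub : Subadditive u := by
      intro m n
      have h1 : dseq α m * dseq α n ≤ dseq α (m + n) := dseq_mul hc hαl m n
      have h2 : (dseq α (m + n))⁻¹ ≤ (dseq α m)⁻¹ * (dseq α n)⁻¹ := by
        rw [← mul_inv]
        exact inv_anti₀ (mul_pos (hdpos m) (hdpos n)) h1
      calc u (m + n) ≤ Real.log ((dseq α m)⁻¹ * (dseq α n)⁻¹) :=
            (Real.log_le_log_iff (inv_pos.2 (hdpos _))
              (mul_pos (inv_pos.2 (hdpos m)) (inv_pos.2 (hdpos n)))).mpr h2
        _ = u m + u n := Real.log_mul (inv_pos.2 (hdpos m)).ne' (inv_pos.2 (hdpos n)).ne'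
    have hbdd : BddBelow (Set.range fun n : ℕ => u n / n) := by
      refine ⟨min (-Real.log c') 0, ?_⟩
      rintro x ⟨n, rfl⟩
      rcases Nat.eq_zero_or_pos n with rfl | hn
      · simp [min_le_right]
      · have h1 : (c' ^ n)⁻¹ ≤ (dseq α n)⁻¹ :=
          inv_anti₀ (hdpos n) (dseq_ub hc hαl hαu n)
        have h2 : Real.log (c' ^ n)⁻¹ ≤ u n :=
          (Real.log_le_log_iff (inv_pos.2 (pow_pos (hc.trans hcc) n))
            (inv_pos.2 (hdpos n))).mpr h1
        have h3 : Real.log (c' ^ n)⁻¹ = -(n * Real.log c') := by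
          rw [Real.log_inv, Real.log_pow]
        have hn' : (0 : ℝ) < n := by exact_mod_cast hn
        refine le_trans (min_le_left _ _) ?_
        rw [le_div_iff₀ hn']
        nlinarith [h2, h3]
    -- find N with d_N⁻¹ < 1
    set N : ℕ := ⌊(1 + M) * M⌋₊ + 1 with hNdef
    have hNpos : 0 < N := Nat.succ_pos _
    have hNgt : (1 + M) * M < N := by
      have := Nat.lt_floor_add_one ((1 + M) * M)
      rw [hNdef]
      push_cast
      push_cast at this
      linarith
    have hNR : (0 : ℝ) < N := by exact_mod_cast hNpos
    set A : ℝ := (1 + M) * M / N with hA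
    have hA0 : 0 < A := by positivity
    have hA1 : A < 1 := by rw [hA, div_lt_one hNR]; exact hNgt
    have hdN : (dseq α N)⁻¹ ≤ A := by
      have hb : ∀ k, A⁻¹ ≤ beta α k N := by
        intro k
        have h1 : (beta α k N)⁻¹ ≤ A := by
          rw [hA, le_div_iff₀ hNR, mul_comm]
          exact hkey N k
        calc A⁻¹ ≤ ((beta α k N)⁻¹)⁻¹ := inv_anti₀ (inv_pos.2 (hbpos k N)) h1
          _ = beta α k N := inv_inv _
      have hd : A⁻¹ ≤ dseq α N := le_ciInf hb
      calc (dseq α N)⁻¹ ≤ (A⁻¹)⁻¹ := inv_anti₀ (inv_pos.2 hA0) hd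
        _ = A := inv_inv _
    have huN : u N < 0 := by
      have : u N ≤ Real.log A :=
        (Real.log_le_log_iff (inv_pos.2 (hdpos N)) hA0).mpr hdN
      exact lt_of_le_of_lt this (Real.log_neg hA0 hA1)
    have hlim_neg : hsub.lim < 0 := by
      have h1 : hsub.lim ≤ u N / N := hsub.lim_le_div hbdd hNpos.ne'
      exact lt_of_le_of_lt h1 (div_neg_of_neg_of_pos huN hNR)
    refine ⟨Real.exp hsub.lim, Real.exp_lt_one_iff.mpr hlim_neg, ?_⟩
    have ht : Tendsto (fun n : ℕ => Real.exp (u n / n)) atTop (nhds (Real.exp hsub.lim)) :=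
      (Real.continuous_exp.continuousAt.tendsto).comp (hsub.tendsto_lim hbdd)
    refine ht.congr fun n => ?_
    rw [Real.rpow_def_of_pos (inv_pos.2 (hdpos n)), div_eq_mul_inv]
  tfae_finish
end

section
/- Let $(\alpha_n)$ be a sequence with $\alpha_n \in (c,c')$, $\beta_k^n = \alpha_k\cdots\alpha_{k+n-1}$, $d_n = \inf_k\beta_k^n$, and $S_k = \sum_{n=1}^\infty(\beta_k^n)^{-1}$. If $S_k \leq M$ for all $k\geq 1$ and some $M > 0$, then for all $k, n \geq 1$, $(\beta_k^n)^{-1} \leq M\cdot\left(\frac{M}{1+M}\right)^{n-1}$, and in particular $\limsup_{n\to\infty}(d_n)^{-1/n} \leq \frac{M}{1+M} < 1$. -/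
open Filter Finset

/-- `S_k = ∑_{n ≥ 1} (β_k^n)⁻¹`. -/
noncomputable def Sseq (α : ℕ → ℝ) (k : ℕ) : ℝ := ∑' n, (beta α k (n + 1))⁻¹

theorem stmt2 (c c' : ℝ) (α : ℕ → ℝ) (hc : 0 < c) (hcc : c < c')
    (hα : ∀ n, α n ∈ Set.Ioo c c')
    (hsum : ∀ k, Summable fun n => (beta α k (n + 1))⁻¹)
    (M : ℝ) (hM : 0 < M) (hSM : ∀ k, Sseq α k ≤ M) :
    (∀ k n : ℕ, (beta α k (n + 1))⁻¹ ≤ M * (M / (1 + M)) ^ n) ∧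
      Filter.limsup (fun n : ℕ => (dseq α n)⁻¹ ^ ((n : ℝ)⁻¹)) Filter.atTop ≤ M / (1 + M) ∧
      M / (1 + M) < 1 := by
  have hα0 : ∀ n, 0 < α n := fun n => hc.trans (hα n).1
  set r : ℝ := M / (1 + M) with hr
  have h1M : (0:ℝ) < 1 + M := by linarith
  have hr0 : 0 < r := div_pos hM h1M
  have hr1 : r < 1 := by
    rw [hr, div_lt_one h1M]; linarith
  have hbpos : ∀ k n, 0 < beta α k n := by
    intro k n
    exact Finset.prod_pos (fun j _ => hα0 _)
  -- beta recurrence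
  have hbeta : ∀ k n, beta α k (n + 1) = beta α (k + 1) n * α k := by
    intro k n
    rw [beta, beta, Finset.prod_range_succ', add_zero]
    congr 1
    exact Finset.prod_congr rfl fun j _ => by congr 1; omega
  have hbeta1 : ∀ k, beta α k 1 = α k := by
    intro k; simp [beta]
  -- S nonneg
  have hS0 : ∀ k, 0 ≤ Sseq α k := by
    intro k
    exact tsum_nonneg fun n => inv_nonneg.2 (hbpos k (n + 1)).le
  -- first term bound
  have hinvle : ∀ k, (α k)⁻¹ ≤ Sseq α k := by
    intro k
    have := Summable.le_tsum (hsum k) 0 (fun i _ => inv_nonneg.2 (hbpos k (i + 1)).le)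
    rwa [hbeta1 k] at this
  -- S recurrence
  have hSrec : ∀ k, Sseq α k = (α k)⁻¹ * (1 + Sseq α (k + 1)) := by
    intro k
    have hg : Summable fun n => (beta α (k + 1) n)⁻¹ :=
      (summable_nat_add_iff 1).1 (hsum (k + 1))
    have h1 : Sseq α k = ∑' n, (α k)⁻¹ * (beta α (k + 1) n)⁻¹ := by
      rw [Sseq]
      congr 1
      ext n
      rw [hbeta k n, mul_inv, mul_comm]
    rw [h1, tsum_mul_left, Summable.tsum_eq_zero_add hg]
    norm_num [beta, Sseq]
  -- main induction
  have key : ∀ n k, (beta α k (n + 1))⁻¹ ≤ Sseq α k * r ^ n := by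
    intro n
    induction n with
    | zero =>
      intro k
      rw [hbeta1 k, pow_zero, mul_one]
      exact hinvle k
    | succ n ih =>
      intro k
      have hrec := hSrec k
      have hαinv : 0 < (α k)⁻¹ := inv_pos.2 (hα0 k)
      have hSk1 : Sseq α (k + 1) ≤ M := hSM (k + 1)
      -- α_k⁻¹ ≥ S_k / (1+M)
      have hlow : Sseq α k ≤ (α k)⁻¹ * (1 + M) := by
        rw [hrec]
        have := hS0 (k + 1)
        nlinarith
      have hstep : (α k)⁻¹ * Sseq α (k + 1) ≤ Sseq α k * r := by
        have h2 : (α k)⁻¹ * Sseq α (k + 1) = Sseq α k - (α k)⁻¹ := by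
          rw [hrec]; ring
        rw [h2, hr]
        rw [div_eq_iff (ne_of_gt h1M)] at *
        have : Sseq α k / (1 + M) ≤ (α k)⁻¹ := by
          rw [div_le_iff₀ h1M]; linarith
        have h3 : Sseq α k - (α k)⁻¹ ≤ Sseq α k - Sseq α k / (1 + M) := by linarith
        calc Sseq α k - (α k)⁻¹ ≤ Sseq α k - Sseq α k / (1 + M) := h3
          _ = Sseq α k * (M / (1 + M)) := by field_simp; ring
      calc (beta α k (n + 1 + 1))⁻¹ = (α k)⁻¹ * (beta α (k + 1) (n + 1))⁻¹ := by
            rw [hbeta k (n + 1), mul_inv, mul_comm]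
        _ ≤ (α k)⁻¹ * (Sseq α (k + 1) * r ^ n) := by
            exact mul_le_mul_of_nonneg_left (ih (k + 1)) hαinv.le
        _ = ((α k)⁻¹ * Sseq α (k + 1)) * r ^ n := by ring
        _ ≤ (Sseq α k * r) * r ^ n :=
            mul_le_mul_of_nonneg_right hstep (pow_nonneg hr0.le n)
        _ = Sseq α k * r ^ (n + 1) := by ring
  have part1 : ∀ k n : ℕ, (beta α k (n + 1))⁻¹ ≤ M * r ^ n := by
    intro k n
    exact (key n k).trans (mul_le_mul_of_nonneg_right (hSM k) (pow_nonneg hr0.le n))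
  refine ⟨part1, ?_, hr1⟩
  -- dseq bound : for n ≥ 1, dseq⁻¹ ≤ (1+M) * r^n
  have hdlow : ∀ m : ℕ, ((1 + M) * r ^ (m + 1))⁻¹ ≤ dseq α (m + 1) := by
    intro m
    apply le_ciInf
    intro k
    have h1 : (beta α k (m + 1))⁻¹ ≤ (1 + M) * r ^ (m + 1) := by
      have : M * r ^ m = (1 + M) * r ^ (m + 1) := by
        rw [pow_succ, hr]; field_simp
      rw [← this]; exact part1 k m
    have hb := hbpos k (m + 1)
    exact (inv_le_comm₀ (by positivity) hb).2 h1
  have hdpos : ∀ m : ℕ, 0 < dseq α (m + 1) := fun m =>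
    lt_of_lt_of_le (by positivity) (hdlow m)
  have hdinv : ∀ m : ℕ, (dseq α (m + 1))⁻¹ ≤ (1 + M) * r ^ (m + 1) := by
    intro m
    exact (inv_le_comm₀ (hdpos m) (by positivity)).2 (hdlow m)
  -- dominating sequence
  set g : ℕ → ℝ := fun n => (1 + M) ^ ((n : ℝ)⁻¹) * r with hg
  have hgtend : Tendsto g atTop (nhds r) := by
    have h1 : Tendsto (fun n : ℕ => ((n : ℝ)⁻¹)) atTop (nhds 0) :=
      tendsto_inv_atTop_nhds_zero_nat
    have h2 : Tendsto (fun n : ℕ => (1 + M) ^ ((n : ℝ)⁻¹)) atTop (nhds ((1 + M) ^ (0:ℝ))) :=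
      Filter.Tendsto.rpow tendsto_const_nhds h1 (Or.inl (ne_of_gt h1M))
    rw [Real.rpow_zero] at h2
    have := h2.mul_const r
    simpa using this
  have hfg : ∀ᶠ n : ℕ in atTop, (dseq α n)⁻¹ ^ ((n : ℝ)⁻¹) ≤ g n := by
    filter_upwards [eventually_ge_atTop 1] with n hn
    obtain ⟨m, rfl⟩ : ∃ m, n = m + 1 := ⟨n - 1, by omega⟩
    have h1 : (dseq α (m + 1))⁻¹ ^ (((m + 1 : ℕ) : ℝ)⁻¹) ≤
        ((1 + M) * r ^ (m + 1)) ^ (((m + 1 : ℕ) : ℝ)⁻¹) :=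
      Real.rpow_le_rpow (inv_nonneg.2 (hdpos m).le) (hdinv m) (by positivity)
    refine h1.trans_eq ?_
    rw [Real.mul_rpow h1M.le (by positivity), hg]
    congr 1
    rw [← Real.rpow_natCast r (m + 1), ← Real.rpow_mul hr0.le]
    rw [mul_inv_cancel₀ (by positivity), Real.rpow_one]
  have hdnn : ∀ n : ℕ, 0 ≤ dseq α n := fun n => le_ciInf fun k => (hbpos k n).le
  have hcob : IsCoboundedUnder (· ≤ ·) atTop (fun n : ℕ => (dseq α n)⁻¹ ^ ((n : ℝ)⁻¹)) := by
    apply isCoboundedUnder_le_of_eventually_le atTop (x := 0)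
    filter_upwards with n
    exact Real.rpow_nonneg (inv_nonneg.2 (hdnn n)) _
  have hbd : IsBoundedUnder (· ≤ ·) atTop g := hgtend.isBoundedUnder_le
  calc limsup (fun n : ℕ => (dseq α n)⁻¹ ^ ((n : ℝ)⁻¹)) atTop ≤ limsup g atTop :=
        limsup_le_limsup hfg hcob hbd
    _ = r := hgtend.limsup_eq
end

section
/- Let $(\alpha_n)$ be a sequence of positive reals with $\alpha_n \in (c,c')$, let $d_n = \inf_{k\geq 1}\prod_{j=k}^{k+n-1}\alpha_j$, and let $\alpha > 0$. Then $\sum_{n=1}^\infty (d_n)^{-\alpha} < \infty$ if and only if $\lim_{n\to\infty}(d_n)^{-1/n} < 1$. -/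
open Filter Finset

theorem stmt3 (c c' : ℝ) (α : ℕ → ℝ) (hc : 0 < c) (hcc : c < c')
    (hα : ∀ n, α n ∈ Set.Ioo c c') (a : ℝ) (ha : 0 < a) :
    (Summable fun n => (dseq α (n + 1))⁻¹ ^ a) ↔
      ∃ L < (1 : ℝ), Filter.Tendsto
        (fun n : ℕ => (dseq α n)⁻¹ ^ ((n : ℝ)⁻¹)) Filter.atTop (nhds L) := by
  have hc' : 0 < c' := hc.trans hcc
  have hbl : ∀ k n, c ^ n ≤ beta α k n := by
    intro k n
    calc c ^ n = ∏ _j ∈ Finset.range n, c := by simp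
    _ ≤ beta α k n := Finset.prod_le_prod (fun i _ => hc.le) (fun i _ => (hα _).1.le)
  have hbu : ∀ k n, beta α k n ≤ c' ^ n := by
    intro k n
    calc beta α k n ≤ ∏ _j ∈ Finset.range n, c' :=
      Finset.prod_le_prod (fun i _ => (hc.trans (hα _).1).le) (fun i _ => (hα _).2.le)
    _ = c' ^ n := by simp
  have hbb : ∀ n, BddBelow (Set.range fun k => beta α k n) :=
    fun n => ⟨c ^ n, by rintro x ⟨k, rfl⟩; exact hbl k n⟩
  have hdl : ∀ n, c ^ n ≤ dseq α n := fun n => le_ciInf fun k => hbl k n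
  have hdpos : ∀ n, 0 < dseq α n := fun n => lt_of_lt_of_le (pow_pos hc n) (hdl n)
  have hdu : ∀ n, dseq α n ≤ c' ^ n := fun n => (ciInf_le (hbb n) 0).trans (hbu 0 n)
  have hsub : ∀ m n, dseq α m * dseq α n ≤ dseq α (m + n) := by
    intro m n
    refine le_ciInf fun k => ?_
    have hsplit : beta α k (m + n) = beta α k m * beta α (k + m) n := by
      unfold beta
      rw [Finset.prod_range_add]
      congr 1
      exact Finset.prod_congr rfl fun i _ => by rw [add_assoc]
    rw [hsplit]
    exact mul_le_mul (ciInf_le (hbb m) k) (ciInf_le (hbb n) (k + m)) (hdpos n).le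
      (le_trans (hdpos m).le (ciInf_le (hbb m) k))
  set u : ℕ → ℝ := fun n => -Real.log (dseq α n) with hu
  have hU : Subadditive u := by
    intro m n
    have := Real.log_le_log (mul_pos (hdpos m) (hdpos n)) (hsub m n)
    rw [Real.log_mul (hdpos m).ne' (hdpos n).ne'] at this
    simp only [hu]
    linarith
  have hbdd : BddBelow (Set.range fun n : ℕ => u n / n) := by
    refine ⟨min 0 (-Real.log c'), ?_⟩
    rintro x ⟨n, rfl⟩
    rcases Nat.eq_zero_or_pos n with rfl | hn
    · simp
    · have hnpos : (0:ℝ) < n := by exact_mod_cast hn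
      have h1 : Real.log (dseq α n) ≤ n * Real.log c' := by
        calc Real.log (dseq α n) ≤ Real.log (c' ^ n) := Real.log_le_log (hdpos n) (hdu n)
        _ = n * Real.log c' := by rw [Real.log_pow]
      have : -Real.log c' ≤ u n / n := by
        rw [le_div_iff₀ hnpos]
        simp only [hu]; nlinarith
      exact le_trans (min_le_right _ _) this
  have key : ∀ n : ℕ, (dseq α n)⁻¹ ^ ((n : ℝ)⁻¹) = Real.exp (u n / n) := by
    intro n
    rw [Real.rpow_def_of_pos (inv_pos.mpr (hdpos n)), Real.log_inv]
    rw [div_eq_mul_inv]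
  have tend : Filter.Tendsto (fun n : ℕ => (dseq α n)⁻¹ ^ ((n : ℝ)⁻¹)) Filter.atTop
      (nhds (Real.exp hU.lim)) := by
    simp only [key]
    exact (Real.continuous_exp.tendsto _).comp (hU.tendsto_lim hbdd)
  have keya : ∀ n : ℕ, (dseq α n)⁻¹ ^ a = Real.exp (u n * a) := by
    intro n
    rw [Real.rpow_def_of_pos (inv_pos.mpr (hdpos n)), Real.log_inv]
  constructor
  · rintro hsum
    refine ⟨Real.exp hU.lim, ?_, tend⟩
    have h0 : Filter.Tendsto (fun n : ℕ => (dseq α (n + 1))⁻¹ ^ a) Filter.atTop (nhds 0) :=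
      hsum.tendsto_atTop_zero
    obtain ⟨n, hn⟩ := (h0.eventually (gt_mem_nhds one_pos)).exists
    have hx : (dseq α (n+1))⁻¹ ^ a < 1 := hn
    have hlt : (dseq α (n+1))⁻¹ < 1 := by
      by_contra hge
      push_neg at hge
      exact absurd (Real.one_le_rpow hge ha.le) (not_le.mpr hx)
    have hd1 : 1 < dseq α (n+1) := by
      rw [inv_lt_one_iff₀] at hlt
      rcases hlt with h | h
      · exact absurd h (not_le.mpr (hdpos (n+1)))
      · exact h
    have hun : u (n+1) < 0 := by
      simp only [hu, neg_lt, neg_zero]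
      exact Real.log_pos hd1
    have : hU.lim < 0 := by
      refine lt_of_le_of_lt (hU.lim_le_div hbdd (Nat.succ_ne_zero n)) ?_
      have : (0:ℝ) < (n+1 : ℕ) := by positivity
      exact div_neg_of_neg_of_pos hun this
    calc Real.exp hU.lim < Real.exp 0 := Real.exp_lt_exp.mpr this
    _ = 1 := Real.exp_zero
  · rintro ⟨L, hL1, hLt⟩
    have hLeq : L = Real.exp hU.lim := tendsto_nhds_unique hLt tend
    have hlim : hU.lim < 0 := by
      rw [hLeq] at hL1
      rwa [← Real.exp_zero, Real.exp_lt_exp] at hL1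
    set ρ : ℝ := Real.exp (hU.lim / 2 * a) with hρ
    have hρ0 : 0 < ρ := Real.exp_pos _
    have hρ1 : ρ < 1 := by
      rw [← Real.exp_zero]
      apply Real.exp_lt_exp.mpr
      nlinarith
    have hev : ∀ᶠ n : ℕ in atTop, u n / n < hU.lim / 2 :=
      (hU.tendsto_lim hbdd).eventually_lt_const (by linarith)
    obtain ⟨N, hN⟩ := eventually_atTop.mp hev
    have hbound : ∀ m : ℕ, N ≤ m → 1 ≤ m → (dseq α m)⁻¹ ^ a ≤ ρ ^ m := by
      intro m hm hm1
      have hmpos : (0:ℝ) < m := by exact_mod_cast hm1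
      have h1 : u m / m < hU.lim / 2 := hN m hm
      have h2 : u m < m * (hU.lim / 2) := by
        rw [div_lt_iff₀ hmpos] at h1; linarith
      have h3 : u m * a ≤ m * (hU.lim / 2 * a) := by nlinarith
      calc (dseq α m)⁻¹ ^ a = Real.exp (u m * a) := keya m
      _ ≤ Real.exp (m * (hU.lim / 2 * a)) := Real.exp_le_exp.mpr h3
      _ = ρ ^ m := by rw [← Real.exp_nat_mul]
    have hgeo : Summable fun n : ℕ => ρ ^ n * ρ ^ (N + 1) :=
      (summable_geometric_of_lt_one hρ0.le hρ1).mul_right _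
    have hshift : Summable fun n : ℕ => (dseq α (n + N + 1))⁻¹ ^ a := by
      refine hgeo.of_nonneg_of_le (fun n => Real.rpow_nonneg (inv_nonneg.mpr (hdpos _).le) a)
        fun n => ?_
      calc (dseq α (n + N + 1))⁻¹ ^ a ≤ ρ ^ (n + N + 1) :=
        hbound _ (by omega) (by omega)
      _ = ρ ^ (n + (N + 1)) := by ring_nf
      _ = ρ ^ n * ρ ^ (N + 1) := pow_add ρ n (N + 1)
    exact (summable_nat_add_iff N).mp hshift
end

section
/- Let $X$ be a separable Banach space and $T : X \to X$ a continuous linear operator. Suppose $T$ is onto, satisfies the splitting $X = \mathrm{Ker}(T^n)\oplus E_n$ with $T(E_{n+1}) = E_n$, $\bigcup_{n\geq 0}\mathrm{Ker}(T^n)$ is dense in $X$, $p(T^n) > 0$ for all $n$, and $\lim_{n\to\infty}(p(T^n))^{-1/n} < 1$. Then for every $x \in \bigcup_n \mathrm{Ker}(T^n)$ there is a right inverse sequence $(S^n(x))$ with $T^n(S^n(x)) = x$ and $\|S^n(x)\| \leq \|x\|/p(T^n)$, and the series $\sum_{n\geq 0}T^n(x)$ and $\sum_{n\geq 0}S^n(x)$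 are unconditionally convergent; hence $T$ satisfies the frequent hypercyclicity/chaos criterion (is frequently hypercyclic and Devaney chaotic). -/
open Filter

open Classical in
/-- A continuous map is frequently hypercyclic if some orbit visits every nonempty
open set with positive lower density. -/
noncomputable def FrequentlyHypercyclic {X : Type*} [TopologicalSpace X] (T : X → X) : Prop :=
  ∃ x : X, ∀ U : Set X, IsOpen U → U.Nonempty →
    0 < Filter.liminf
      (fun N : ℕ => (((Finset.range N).filter (fun k => T^[k] x ∈ U)).card : ℝ) / (N : ℝ))
      Filter.atTop

/-- Devaney chaos: topological transitivity together with a dense set of periodic points. -/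
def DevaneyChaotic {X : Type*} [TopologicalSpace X] (T : X → X) : Prop :=
  (∀ U V : Set X, IsOpen U → IsOpen V → U.Nonempty → V.Nonempty →
      ∃ n : ℕ, ((T^[n]) '' U ∩ V).Nonempty) ∧
    Dense {x : X | ∃ n : ℕ, 0 < n ∧ T^[n] x = x}


private def Kb (p i : ℕ) : ℕ := 2^(p-1) * (2*i+1)

private def Aset (p : ℕ) : Set ℕ :=
  { n | ∃ i j : ℕ, n = (Kb p i)^2 + p + 2*p*j ∧ n + p ≤ (Kb p i + 1)^2 }

private lemma Kb_inj {p q i j : ℕ} (hp : 1 ≤ p) (hq : 1 ≤ q) (h : Kb p i = Kb q j) :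
    p = q ∧ i = j := by
  unfold Kb at h
  rcases Nat.lt_trichotomy p q with hlt | heq | hlt
  · exfalso
    have hq1 : q - 1 = (p-1) + (q-p) := by omega
    rw [hq1, pow_add, mul_assoc] at h
    have h2 := Nat.eq_of_mul_eq_mul_left (show 0 < 2^(p-1) by positivity) h
    have : ∃ t, 2^(q-p) = 2*t := ⟨2^(q-p-1), by rw [← pow_succ']; congr 1; omega⟩
    obtain ⟨t, ht⟩ := this
    rw [ht, mul_assoc] at h2; omega
  · subst heq
    have h2 := Nat.eq_of_mul_eq_mul_left (show 0 < 2^(p-1) by positivity) h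
    omega
  · exfalso
    have hq1 : p - 1 = (q-1) + (p-q) := by omega
    rw [hq1, pow_add, mul_assoc] at h
    have h2 := Nat.eq_of_mul_eq_mul_left (show 0 < 2^(q-1) by positivity) h.symm
    have : ∃ t, 2^(p-q) = 2*t := ⟨2^(p-q-1), by rw [← pow_succ']; congr 1; omega⟩
    obtain ⟨t, ht⟩ := this
    rw [ht, mul_assoc] at h2; omega

private lemma Aset_sep {p q n m : ℕ} (hp : 1 ≤ p) (hq : 1 ≤ q)
    (hn : n ∈ Aset p) (hm : m ∈ Aset q) (hlt : n < m) : n + p + q ≤ m := by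
  obtain ⟨i, j, hn1, hn2⟩ := hn
  obtain ⟨i', j', hm1, hm2⟩ := hm
  rcases Nat.lt_trichotomy (Kb p i) (Kb q i') with hk | hk | hk
  · have h1 : (Kb p i + 1)^2 ≤ (Kb q i')^2 := Nat.pow_le_pow_left hk 2
    have h2 : (Kb q i')^2 + q ≤ m := by omega
    omega
  · obtain ⟨rfl, rfl⟩ := Kb_inj hp hq hk
    have : j < j' := by nlinarith [hn1, hm1]
    nlinarith
  · exfalso
    have h1 : (Kb q i' + 1)^2 ≤ (Kb p i)^2 := Nat.pow_le_pow_left hk 2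
    omega

private lemma Aset_disj {p q n : ℕ} (hp : 1 ≤ p) (hq : 1 ≤ q)
    (hn : n ∈ Aset p) (hm : n ∈ Aset q) : p = q := by
  obtain ⟨i, j, hn1, hn2⟩ := hn
  obtain ⟨i', j', hm1, hm2⟩ := hm
  rcases Nat.lt_trichotomy (Kb p i) (Kb q i') with hk | hk | hk
  · exfalso
    have h1 : (Kb p i + 1)^2 ≤ (Kb q i')^2 := Nat.pow_le_pow_left hk 2
    omega
  · exact (Kb_inj hp hq hk).1
  · exfalso
    have h1 : (Kb q i' + 1)^2 ≤ (Kb p i)^2 := Nat.pow_le_pow_left hk 2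
    omega

private lemma Aset_ge {p n : ℕ} (hn : n ∈ Aset p) : p ≤ n := by
  obtain ⟨i, j, hn1, _⟩ := hn; omega

private lemma Kb_bound (p i : ℕ) (hp : 1 ≤ p) : Kb p i + 1 ≤ 2^p * (i+1) := by
  unfold Kb
  have h : 2^p = 2^(p-1) * 2 := by rw [← pow_succ]; congr 1; omega
  have h2 : 1 ≤ 2^(p-1) := Nat.one_le_two_pow
  nlinarith

private lemma Aset_mem_ub (p i j : ℕ) (hp : 1 ≤ p) (hj : j < i) :
    (Kb p i)^2 + p + 2*p*j + p ≤ (Kb p i + 1)^2 := by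
  have hk : p * i ≤ Kb p i := by
    unfold Kb
    have : p < 2^p := Nat.lt_two_pow_self
    have h : 2^p = 2^(p-1) * 2 := by rw [← pow_succ]; congr 1; omega
    nlinarith
  nlinarith

private lemma Aset_mem (p i j : ℕ) (hp : 1 ≤ p) (hj : j < i) :
    (Kb p i)^2 + p + 2*p*j ∈ Aset p :=
  ⟨i, j, rfl, Aset_mem_ub p i j hp hj⟩

private lemma Aset_card (p : ℕ) (hp : 1 ≤ p) (N I : ℕ) (hI : (2^p*I)^2 ≤ N) :
    ∃ F : Finset ℕ, (∀ n ∈ F, n ∈ Aset p ∧ n < N) ∧ I*(I-1) ≤ 2 * F.card := by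
  classical
  set G := (Finset.range I).sigma (fun i => Finset.range i) with hG
  refine ⟨G.image (fun ij => (Kb p ij.1)^2 + p + 2*p*ij.2), ?_, ?_⟩
  · intro n hn
    simp only [Finset.mem_image, Finset.mem_sigma, Finset.mem_range, hG] at hn
    obtain ⟨⟨i, j⟩, ⟨hi, hj⟩, rfl⟩ := hn
    simp only at hi hj ⊢
    refine ⟨Aset_mem p i j hp hj, ?_⟩
    show (Kb p i)^2 + p + 2*p*j < N
    have hb : (Kb p i + 1)^2 ≤ (2^p * I)^2 := by
      have := Kb_bound p i hp
      have h2 : 2^p * (i+1) ≤ 2^p * I := Nat.mul_le_mul_left _ (by omega)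
      exact Nat.pow_le_pow_left (le_trans this h2) 2
    have hub' : (Kb p i)^2 + p + 2*p*j + p ≤ (Kb p i + 1)^2 := Aset_mem_ub p i j hp hj
    omega
  · have hinj : Set.InjOn (fun ij : (_ : ℕ) × ℕ => (Kb p ij.1)^2 + p + 2*p*ij.2) ↑G := by
      rintro ⟨i, j⟩ hij ⟨i', j'⟩ hij' heq
      simp only [hG, Finset.coe_sigma, Set.mem_sigma_iff, Finset.mem_coe, Finset.mem_range] at hij hij'
      simp only at heq
      have hii : i = i' := by
        by_contra hne
        have hm1 := Aset_mem_ub p i j hp hij.2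
        have hm2 := Aset_mem_ub p i' j' hp hij'.2
        rcases Nat.lt_trichotomy (Kb p i) (Kb p i') with hk | hk | hk
        · have h1 : (Kb p i + 1)^2 ≤ (Kb p i')^2 := Nat.pow_le_pow_left hk 2
          nlinarith
        · exact hne (Kb_inj hp hp hk).2
        · have h1 : (Kb p i' + 1)^2 ≤ (Kb p i)^2 := Nat.pow_le_pow_left hk 2
          nlinarith
      subst hii
      have h3 : 2*p*j = 2*p*j' := by omega
      have : j = j' := Nat.eq_of_mul_eq_mul_left (show 0 < 2*p by omega) h3
      simp [this]
    rw [Finset.card_image_of_injOn hinj]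
    have hcard : G.card = ∑ i ∈ Finset.range I, i := by
      simp [hG, Finset.card_sigma]
    rw [hcard]
    have := Finset.sum_range_id_mul_two I
    omega

private lemma real_est (S P2 CF CN Ii : ℝ) (hP2 : 1 ≤ P2) (hSge : 4*P2 ≤ S)
    (hS8 : 8 ≤ S) (hIr : 4 ≤ Ii) (hIlb : S/P2 - 1 ≤ Ii) (hFlb : Ii*(Ii-1) ≤ 2*CF)
    (hNub : CN < (S+1)^2) (hSN : S*S ≤ CN) : CN ≤ 32*P2^2*CF := by
  have hP2pos : (0:ℝ) < P2 := by linarith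
  have hI1 : S / (2 * P2) ≤ Ii - 1 := by
    rw [div_le_iff₀ (by positivity : (0:ℝ) < 2*P2)]
    have hc : S / P2 * P2 = S := div_mul_cancel₀ _ (ne_of_gt hP2pos)
    nlinarith
  have e1 : (Ii-1)^2 ≤ Ii*(Ii-1) := by nlinarith
  have e2 : (S/(2*P2))^2 ≤ (Ii-1)^2 := by
    apply pow_le_pow_left₀ (by positivity) hI1
  have e3 : (S/(2*P2))^2 = S^2/(4*P2^2) := by field_simp; ring
  have e5 : S^2 ≤ 8 * P2^2 * CF := by
    rw [e3] at e2
    have h6 := le_trans e2 (le_trans e1 hFlb)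
    rw [div_le_iff₀ (by positivity : (0:ℝ) < 4*P2^2)] at h6
    nlinarith
  have e4 : CN ≤ 2*S^2 := by nlinarith
  nlinarith

private lemma Aset_count (p : ℕ) (hp : 1 ≤ p) :
    ∃ c : ℝ, 0 < c ∧ ∀ᶠ N : ℕ in atTop, ∀ (Q : ℕ → Prop) (_ : DecidablePred Q),
      (∀ n, n < N → n ∈ Aset p → Q n) →
      c ≤ (((Finset.range N).filter Q).card : ℝ) / (N : ℝ) := by
  refine ⟨((32:ℝ) * (2^p)^2)⁻¹, by positivity, ?_⟩
  filter_upwards [eventually_ge_atTop ((2^(p+2))^2)] with N hN Q _ hQ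
  set s := Nat.sqrt N with hs
  have hsge : 2^(p+2) ≤ s := by
    rw [hs, Nat.le_sqrt]
    calc 2^(p+2) * 2^(p+2) = (2^(p+2))^2 := (sq _).symm
    _ ≤ N := hN
  set I := s / 2^p with hI
  have hI4 : 4 ≤ I := by
    rw [hI, Nat.le_div_iff_mul_le (by positivity)]
    calc 4 * 2^p = 2^(p+2) := by ring
    _ ≤ s := hsge
  have hIb : (2^p * I)^2 ≤ N := by
    have h1 : 2^p * I ≤ s := by
      rw [hI, mul_comm]; exact Nat.div_mul_le_self s (2^p)
    calc (2^p*I)^2 ≤ s^2 := Nat.pow_le_pow_left h1 2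
    _ = s * s := sq s
    _ ≤ N := Nat.sqrt_le N
  have hmod : 2^p * I + s % 2^p = s := by rw [hI]; exact Nat.div_add_mod s (2^p)
  have hmlt : s % 2^p < 2^p := Nat.mod_lt _ (by positivity)
  have hsq : N < (s+1)*(s+1) := by rw [hs]; exact Nat.lt_succ_sqrt N
  have hsN : s * s ≤ N := by rw [hs]; exact Nat.sqrt_le N
  obtain ⟨F, hF1, hF2⟩ := Aset_card p hp N I hIb
  clear_value s I
  have hsub : F ⊆ (Finset.range N).filter Q := by
    intro n hn
    obtain ⟨hn1, hn2⟩ := hF1 n hn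
    exact Finset.mem_filter.2 ⟨Finset.mem_range.2 hn2, hQ n hn2 hn1⟩
  have hcard : F.card ≤ ((Finset.range N).filter Q).card := Finset.card_le_card hsub
  have hNpos : 0 < (N:ℝ) := by
    have : 0 < N := lt_of_lt_of_le (by positivity) hN
    exact_mod_cast this
  rw [le_div_iff₀ hNpos]
  -- real versions
  have r1 : (1:ℝ) ≤ (2:ℝ)^p := one_le_pow₀ one_le_two
  have r2 : 4*(2:ℝ)^p ≤ (s:ℝ) := by
    have h0 : ((2^(p+2) : ℕ) : ℝ) ≤ (s:ℝ) := by exact_mod_cast hsge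
    push_cast at h0
    have h1 : (2:ℝ)^(p+2) = 4*2^p := by ring
    linarith
  have r3 : (8:ℝ) ≤ (s:ℝ) := by
    have h2 : (2:ℝ) ≤ 2^p := by
      calc (2:ℝ) = 2^1 := (pow_one 2).symm
      _ ≤ 2^p := pow_le_pow_right₀ one_le_two hp
    nlinarith
  have r4 : (4:ℝ) ≤ (I:ℝ) := by exact_mod_cast hI4
  have r5 : (s:ℝ)/(2:ℝ)^p - 1 ≤ (I:ℝ) := by
    have hm : (s:ℝ) = (2:ℝ)^p * (I:ℝ) + ((s % 2^p : ℕ):ℝ) := by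
      have := congrArg (Nat.cast : ℕ → ℝ) hmod.symm
      push_cast at this; linarith
    have hm2 : ((s % 2^p : ℕ):ℝ) ≤ (2:ℝ)^p := by
      have : ((s % 2^p : ℕ):ℝ) ≤ ((2^p : ℕ):ℝ) := by exact_mod_cast hmlt.le
      push_cast at this; linarith
    rw [sub_le_iff_le_add, div_le_iff₀ (by positivity : (0:ℝ) < (2:ℝ)^p)]
    nlinarith
  have r6 : (I:ℝ)*((I:ℝ)-1) ≤ 2*(F.card:ℝ) := by
    have h1 : (1:ℕ) ≤ I := by omega
    have : ((I*(I-1) : ℕ):ℝ) = (I:ℝ) * ((I:ℝ)-1) := by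
      push_cast [Nat.cast_sub h1]; ring
    rw [← this]; exact_mod_cast hF2
  have r7 : (N:ℝ) < ((s:ℝ)+1)^2 := by
    have : (N:ℝ) < ((s+1 : ℕ):ℝ) * ((s+1:ℕ):ℝ) := by exact_mod_cast hsq
    push_cast at this; nlinarith
  have r8 : (s:ℝ)*(s:ℝ) ≤ (N:ℝ) := by exact_mod_cast hsN
  have key := real_est (s:ℝ) ((2:ℝ)^p) (F.card:ℝ) (N:ℝ) (I:ℝ) r1 r2 r3 r4 r5 r6 r7 r8
  have hQc : ((F.card:ℝ)) ≤ (((Finset.range N).filter Q).card : ℝ) := by exact_mod_cast hcard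
  have hfin : (N:ℝ) ≤ 32 * ((2:ℝ)^p)^2 * (((Finset.range N).filter Q).card : ℝ) := by nlinarith
  rw [inv_mul_le_iff₀ (by positivity)]
  linarith


private lemma pow_apply_iter {X : Type*} [NormedAddCommGroup X] [NormedSpace ℝ X]
    (T : X →L[ℝ] X) (n : ℕ) (x : X) : (T^n) x = (⇑T)^[n] x := by
  induction n with
  | zero => simp
  | succ k ih => rw [pow_succ', Function.iterate_succ_apply']
                 simp [ContinuousLinearMap.mul_apply, ih]

private lemma geom_bound (pT : ℕ → ℝ) (hpos : ∀ n, 1 ≤ n → 0 < pT n)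
    (hlim : ∃ L < (1 : ℝ), Tendsto
      (fun n : ℕ => (pT (n + 1))⁻¹ ^ (((n : ℝ) + 1)⁻¹)) atTop (nhds L)) :
    ∃ r C : ℝ, 0 < r ∧ r < 1 ∧ 1 ≤ C ∧ ∀ n, 1 ≤ n → (pT n)⁻¹ ≤ C * r^n := by
  obtain ⟨L, hL1, htd⟩ := hlim
  have hL0 : 0 ≤ L := by
    refine ge_of_tendsto' htd fun n => ?_
    exact Real.rpow_nonneg (inv_nonneg.2 (hpos (n+1) (by omega)).le) _
  set r := (L+1)/2 with hr
  have hr0 : 0 < r := by rw [hr]; linarith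
  have hr1 : r < 1 := by rw [hr]; linarith
  have hLr : L < r := by rw [hr]; linarith
  obtain ⟨N, hN⟩ := (htd.eventually_lt_const hLr).exists_forall_of_atTop
  have key : ∀ n, N ≤ n → (pT (n+1))⁻¹ ≤ r^(n+1) := by
    intro n hn
    have h := hN n hn
    have ha : 0 ≤ (pT (n+1))⁻¹ := inv_nonneg.2 (hpos (n+1) (by omega)).le
    have he : ((pT (n+1))⁻¹ ^ (((n:ℝ)+1)⁻¹))^(n+1) = (pT (n+1))⁻¹ := by
      rw [← Real.rpow_natCast ((pT (n+1))⁻¹ ^ (((n:ℝ)+1)⁻¹)) (n+1), ← Real.rpow_mul ha]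
      rw [show (((n:ℝ)+1)⁻¹ * ((n+1 : ℕ):ℝ)) = 1 by
        push_cast; rw [inv_mul_cancel₀]; positivity]
      exact Real.rpow_one _
    calc (pT (n+1))⁻¹ = ((pT (n+1))⁻¹ ^ (((n:ℝ)+1)⁻¹))^(n+1) := he.symm
    _ ≤ r^(n+1) := pow_le_pow_left₀ (Real.rpow_nonneg ha _) h.le _
  refine ⟨r, 1 + ∑ n ∈ Finset.Icc 1 (N+1), (pT n)⁻¹ * (r^n)⁻¹, hr0, hr1, ?_, ?_⟩
  · have : 0 ≤ ∑ n ∈ Finset.Icc 1 (N+1), (pT n)⁻¹ * (r^n)⁻¹ := by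
      apply Finset.sum_nonneg
      intro i hi
      have hi1 : 1 ≤ i := (Finset.mem_Icc.1 hi).1
      have := hpos i hi1
      positivity
    linarith
  · intro n hn
    rcases le_or_gt n (N+1) with hc | hc
    · have hmem : n ∈ Finset.Icc 1 (N+1) := Finset.mem_Icc.2 ⟨hn, hc⟩
      have hle : (pT n)⁻¹ * (r^n)⁻¹ ≤ ∑ m ∈ Finset.Icc 1 (N+1), (pT m)⁻¹ * (r^m)⁻¹ := by
        apply Finset.single_le_sum (fun i hi => ?_) hmem
        have hi1 : 1 ≤ i := (Finset.mem_Icc.1 hi).1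
        have := hpos i hi1
        positivity
      have hrn : (0:ℝ) < r^n := by positivity
      have h2 : (pT n)⁻¹ = ((pT n)⁻¹ * (r^n)⁻¹) * r^n := by
        rw [mul_assoc, inv_mul_cancel₀ hrn.ne', mul_one]
      rw [h2]
      have h3 : (pT n)⁻¹ * (r^n)⁻¹ ≤ 1 + ∑ m ∈ Finset.Icc 1 (N+1), (pT m)⁻¹ * (r^m)⁻¹ := by
        linarith
      exact mul_le_mul_of_nonneg_right h3 hrn.le
    · obtain ⟨m, rfl⟩ : ∃ m, n = m + 1 := ⟨n-1, by omega⟩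
      have h1 : (pT (m+1))⁻¹ ≤ r^(m+1) := key m (by omega)
      have h2 : (1:ℝ) ≤ 1 + ∑ m ∈ Finset.Icc 1 (N+1), (pT m)⁻¹ * (r^m)⁻¹ := by
        have : 0 ≤ ∑ m ∈ Finset.Icc 1 (N+1), (pT m)⁻¹ * (r^m)⁻¹ := by
          apply Finset.sum_nonneg
          intro i hi
          have hi1 : 1 ≤ i := (Finset.mem_Icc.1 hi).1
          have := hpos i hi1
          positivity
        linarith
      calc (pT (m+1))⁻¹ ≤ r^(m+1) := h1
      _ = 1 * r^(m+1) := (one_mul _).symm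
      _ ≤ _ := mul_le_mul_of_nonneg_right h2 (by positivity)

private lemma right_inv {X : Type*} [NormedAddCommGroup X] [NormedSpace ℝ X]
    (T : X →L[ℝ] X) (hsurj : Function.Surjective T)
    (E : ℕ → Submodule ℝ X)
    (hcompl : ∀ n, 1 ≤ n → IsCompl (LinearMap.ker ((T ^ n : X →L[ℝ] X) : X →ₗ[ℝ] X)) (E n))
    (hmap : ∀ n, 1 ≤ n → (E (n + 1)).map (T : X →ₗ[ℝ] X) = E n)
    (pT : ℕ → ℝ)
    (hpT : ∀ n, 1 ≤ n → IsGLB {r : ℝ | ∃ x ∈ E n, ‖x‖ = 1 ∧ ‖(T ^ n) x‖ = r} (pT n))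
    (hpos : ∀ n, 1 ≤ n → 0 < pT n) (x : X) :
    ∃ s : ℕ → X, s 0 = x ∧ (∀ n : ℕ, T (s (n + 1)) = s n) ∧
      (∀ n, 1 ≤ n → ‖s n‖ ≤ ‖x‖ / pT n) ∧ (∀ n k : ℕ, (T^k) (s (n+k)) = s n) := by
  classical
  -- lower bound on E n
  have hlb : ∀ n, 1 ≤ n → ∀ e, e ∈ E n → pT n * ‖e‖ ≤ ‖(T^n) e‖ := by
    intro n hn e he
    rcases eq_or_ne e 0 with rfl | hne
    · simp
    · have hu : ‖e‖⁻¹ • e ∈ E n := (E n).smul_mem _ he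
      have hu1 : ‖‖e‖⁻¹ • e‖ = 1 := norm_smul_inv_norm hne
      have hmem : ‖(T^n) (‖e‖⁻¹ • e)‖ ∈ {r : ℝ | ∃ y ∈ E n, ‖y‖ = 1 ∧ ‖(T ^ n) y‖ = r} :=
        ⟨‖e‖⁻¹ • e, hu, hu1, rfl⟩
      have h1 : pT n ≤ ‖(T^n) (‖e‖⁻¹ • e)‖ := (hpT n hn).1 hmem
      have h2 : ‖(T^n) (‖e‖⁻¹ • e)‖ = ‖e‖⁻¹ * ‖(T^n) e‖ := by
        rw [map_smul, norm_smul, norm_inv, norm_norm]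
      rw [h2] at h1
      have hepos : 0 < ‖e‖ := norm_pos_iff.2 hne
      calc pT n * ‖e‖ ≤ (‖e‖⁻¹ * ‖(T^n) e‖) * ‖e‖ :=
        mul_le_mul_of_nonneg_right h1 hepos.le
      _ = ‖(T^n) e‖ := by field_simp
  -- injectivity on E n
  have hinj : ∀ n, 1 ≤ n → ∀ e, e ∈ E n → (T^n) e = 0 → e = 0 := by
    intro n hn e he h0
    have h1 := hlb n hn e he
    rw [h0, norm_zero] at h1
    have := hpos n hn
    have : ‖e‖ ≤ 0 := by nlinarith
    exact norm_le_zero_iff.1 this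
  -- existence on E n
  have hex : ∀ n, 1 ≤ n → ∀ y : X, ∃ e, e ∈ E n ∧ (T^n) e = y := by
    intro n hn y
    have hTs : Function.Surjective (T^n) := by
      intro z
      obtain ⟨w, hw⟩ := (hsurj.iterate n) z
      exact ⟨w, by rw [pow_apply_iter]; exact hw⟩
    obtain ⟨z, hz⟩ := hTs y
    have hz2 : z ∈ LinearMap.ker ((T^n : X →L[ℝ] X) : X →ₗ[ℝ] X) ⊔ E n := by
      rw [(hcompl n hn).sup_eq_top]; trivial
    obtain ⟨a, ha, b, hb, hab⟩ := Submodule.mem_sup.1 hz2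
    refine ⟨b, hb, ?_⟩
    have haz : (T^n) a = 0 := by
      have := LinearMap.mem_ker.1 ha
      exact this
    have : (T^n) z = (T^n) a + (T^n) b := by rw [← map_add, hab]
    rw [haz, zero_add] at this
    rw [← this, hz]
  -- define s
  have hchoice : ∀ n : ℕ, 1 ≤ n → ∃ e, e ∈ E n ∧ (T^n) e = x := fun n hn => hex n hn x
  set s : ℕ → X := fun n => if h : 1 ≤ n then (hchoice n h).choose else x with hs
  have hs0 : s 0 = x := by simp [hs]
  have hsn : ∀ n, 1 ≤ n → s n ∈ E n ∧ (T^n) (s n) = x := by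
    intro n hn
    simp only [hs, dif_pos hn]
    exact (hchoice n hn).choose_spec
  have hTstep : ∀ n : ℕ, T (s (n + 1)) = s n := by
    intro n
    rcases Nat.eq_zero_or_pos n with rfl | hn
    · have h1 := (hsn 1 le_rfl).2
      rw [pow_one] at h1
      rw [h1, hs0]
    · have h1 : T (s (n+1)) ∈ E n := by
        rw [← hmap n hn]
        exact Submodule.mem_map.2 ⟨s (n+1), (hsn (n+1) (by omega)).1, rfl⟩
      have h2 : (T^n) (T (s (n+1))) = x := by
        have := (hsn (n+1) (by omega)).2
        rw [← this, pow_succ, ContinuousLinearMap.mul_apply]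
      have h3 : (T^n) (T (s (n+1)) - s n) = 0 := by
        rw [map_sub, h2, (hsn n hn).2, sub_self]
      have h4 : T (s (n+1)) - s n ∈ E n := (E n).sub_mem h1 (hsn n hn).1
      have h5 := hinj n hn _ h4 h3
      exact sub_eq_zero.1 h5
  have hiter : ∀ n k : ℕ, (T^k) (s (n+k)) = s n := by
    intro n k
    induction k with
    | zero => simp
    | succ m ih =>
      rw [pow_succ, ContinuousLinearMap.mul_apply, show n + (m+1) = (n+m) + 1 by ring,
        hTstep (n+m), ih]
  refine ⟨s, hs0, hTstep, ?_, hiter⟩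
  intro n hn
  have h1 := hlb n hn (s n) (hsn n hn).1
  rw [(hsn n hn).2] at h1
  rw [le_div_iff₀ (hpos n hn)]
  linarith

set_option maxHeartbeats 4000000 in
theorem stmt7 (X : Type*) [NormedAddCommGroup X] [NormedSpace ℝ X] [CompleteSpace X]
    [TopologicalSpace.SeparableSpace X]
    (T : X →L[ℝ] X) (hsurj : Function.Surjective T) (hninj : ¬ Function.Injective T)
    (E : ℕ → Submodule ℝ X)
    (hclosed : ∀ n, 1 ≤ n → IsClosed (E n : Set X))
    (hcompl : ∀ n, 1 ≤ n → IsCompl (LinearMap.ker ((T ^ n : X →L[ℝ] X) : X →ₗ[ℝ] X)) (E n))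
    (hmap : ∀ n, 1 ≤ n → (E (n + 1)).map (T : X →ₗ[ℝ] X) = E n)
    (hdense : Dense (⋃ n : ℕ, (LinearMap.ker ((T ^ n : X →L[ℝ] X) : X →ₗ[ℝ] X) : Set X)))
    (pT : ℕ → ℝ)
    (hpT : ∀ n, 1 ≤ n → IsGLB {r : ℝ | ∃ x ∈ E n, ‖x‖ = 1 ∧ ‖(T ^ n) x‖ = r} (pT n))
    (hpos : ∀ n, 1 ≤ n → 0 < pT n)
    (hlim : ∃ L < (1 : ℝ), Filter.Tendsto
      (fun n : ℕ => (pT (n + 1))⁻¹ ^ (((n : ℝ) + 1)⁻¹)) Filter.atTop (nhds L)) :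
    (∀ x ∈ ⋃ n : ℕ, (LinearMap.ker ((T ^ n : X →L[ℝ] X) : X →ₗ[ℝ] X) : Set X),
      ∃ s : ℕ → X, s 0 = x ∧ (∀ n : ℕ, T (s (n + 1)) = s n) ∧
        (∀ n : ℕ, 1 ≤ n → ‖s n‖ ≤ ‖x‖ / pT n) ∧
        Summable (fun n : ℕ => (T ^ n) x) ∧ Summable s) ∧
      FrequentlyHypercyclic (fun y : X => T y) ∧ DevaneyChaotic (fun y : X => T y) := by
  classical
  obtain ⟨r, C, hr0, hr1, hC1, hCr⟩ := geom_bound pT hpos hlim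
  have hC0 : (0:ℝ) < C := lt_of_lt_of_le one_pos hC1
  have hpart := fun x : X => right_inv T hsurj E hcompl hmap pT hpT hpos x
  -- uniform geometric bound for right-inverse sequences
  have hnormgen : ∀ (x : X) (s : ℕ → X), s 0 = x → (∀ n, 1 ≤ n → ‖s n‖ ≤ ‖x‖ / pT n) →
      ∀ n, ‖s n‖ ≤ C * ‖x‖ * r^n := by
    intro x s h0 hb n
    rcases Nat.eq_zero_or_pos n with rfl | hn
    · rw [h0, pow_zero, mul_one]
      nlinarith [norm_nonneg x]
    · have h1 := hb n hn
      have h2 : ‖x‖ / pT n = ‖x‖ * (pT n)⁻¹ := div_eq_mul_inv _ _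
      have h3 : ‖x‖ * (pT n)⁻¹ ≤ ‖x‖ * (C * r^n) :=
        mul_le_mul_of_nonneg_left (hCr n hn) (norm_nonneg x)
      calc ‖s n‖ ≤ ‖x‖ / pT n := h1
      _ = ‖x‖ * (pT n)⁻¹ := h2
      _ ≤ ‖x‖ * (C * r^n) := h3
      _ = C * ‖x‖ * r^n := by ring
  -- Part 1
  have part1 : ∀ x ∈ ⋃ n : ℕ, (LinearMap.ker ((T ^ n : X →L[ℝ] X) : X →ₗ[ℝ] X) : Set X),
      ∃ s : ℕ → X, s 0 = x ∧ (∀ n : ℕ, T (s (n + 1)) = s n) ∧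
        (∀ n : ℕ, 1 ≤ n → ‖s n‖ ≤ ‖x‖ / pT n) ∧
        Summable (fun n : ℕ => (T ^ n) x) ∧ Summable s := by
    intro x hx
    obtain ⟨m, hm⟩ := Set.mem_iUnion.1 hx
    have hm' : (T^m) x = 0 := LinearMap.mem_ker.1 hm
    obtain ⟨s, h0, hstep, hnorm, hiter⟩ := hpart x
    refine ⟨s, h0, hstep, hnorm, ?_, ?_⟩
    · apply summable_of_ne_finset_zero (s := Finset.range m)
      intro n hn
      rw [Finset.mem_range, not_lt] at hn
      have : T^n = T^(n-m) * T^m := by rw [← pow_add]; congr 1; omega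
      rw [this, ContinuousLinearMap.mul_apply, hm', map_zero]
    · have hb := hnormgen x s h0 hnorm
      exact Summable.of_norm_bounded
        (((summable_geometric_of_lt_one hr0.le hr1).mul_left (C * ‖x‖))) hb
  refine ⟨part1, ?_⟩
  -- setup for hypercyclicity
  set ρ : ℝ := Real.sqrt r with hρ
  have hρ0 : 0 < ρ := Real.sqrt_pos.2 hr0
  have hρ1 : ρ < 1 := by
    rw [hρ, show (1:ℝ) = Real.sqrt 1 by rw [Real.sqrt_one]]
    exact Real.sqrt_lt_sqrt hr0.le hr1
  have hρ2 : ρ^2 = r := Real.sq_sqrt hr0.le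
  clear_value ρ
  -- countable dense sequence inside the union of kernels
  set D : Set X := ⋃ n : ℕ, (LinearMap.ker ((T ^ n : X →L[ℝ] X) : X →ₗ[ℝ] X) : Set X) with hD
  have hDne : D.Nonempty := ⟨0, Set.mem_iUnion.2 ⟨0, Submodule.zero_mem _⟩⟩
  haveI : Nonempty ↥D := hDne.to_subtype
  haveI : SecondCountableTopology X :=
    UniformSpace.secondCountable_of_separable X
  haveI : TopologicalSpace.SeparableSpace ↥D :=
    TopologicalSpace.SecondCountableTopology.to_separableSpace
  set d : ℕ → X := fun j => (TopologicalSpace.denseSeq ↥D j : X) with hd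
  have hdR : DenseRange d :=
    (hdense.denseRange_val).comp (TopologicalSpace.denseRange_denseSeq ↥D)
      continuous_subtype_val
  have hdD : ∀ j, ∃ n : ℕ, (T^n) (d j) = 0 := by
    intro j
    obtain ⟨n, hn⟩ := Set.mem_iUnion.1 (TopologicalSpace.denseSeq ↥D j).2
    exact ⟨n, LinearMap.mem_ker.1 hn⟩
  clear_value d
  choose mj hmj using hdD
  choose sc hsc0 hscT hscN hscI using fun j => hpart (d j)
  have hscB : ∀ j n, ‖sc j n‖ ≤ C * ‖d j‖ * r^n := fun j =>
    hnormgen (d j) (sc j) (hsc0 j) (hscN j)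
  have hker : ∀ j k, mj j ≤ k → (T^k) (d j) = 0 := by
    intro j k hk
    have : T^k = T^(k - mj j) * T^(mj j) := by rw [← pow_add]; congr 1; omega
    rw [this, ContinuousLinearMap.mul_apply, hmj, map_zero]
  -- scheduling
  set hfun : ℕ → ℕ := fun p => (Nat.unpair p).1 with hhfun
  have hhit : ∀ j B : ℕ, ∃ p, B ≤ p ∧ hfun p = j := by
    intro j B
    exact ⟨Nat.pair j B, Nat.right_le_pair j B, by simp [hhfun]⟩
  set ok : ℕ → Prop := fun p => ‖d (hfun p)‖ ≤ (p:ℝ) ∧ mj (hfun p) ≤ p ∧ 1 ≤ p with hok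
  set y : ℕ → X := fun p => if ok p then d (hfun p) else 0 with hy
  set w : ℕ → ℕ → X := fun p => if ok p then sc (hfun p) else (fun _ => 0) with hw
  have hw0 : ∀ p, w p 0 = y p := by
    intro p
    simp only [hw, hy]
    by_cases h : ok p
    · rw [if_pos h, if_pos h]; exact hsc0 _
    · rw [if_neg h, if_neg h]
  have hwI : ∀ p n k, (T^k) (w p (n+k)) = w p n := by
    intro p n k
    simp only [hw]
    by_cases h : ok p
    · rw [if_pos h]; exact hscI _ _ _
    · rw [if_neg h]; simp
  have hwB : ∀ p n, ‖w p n‖ ≤ C * (p:ℝ) * r^n := by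
    intro p n
    by_cases h : ok p
    · simp only [hw, if_pos h]
      calc ‖sc (hfun p) n‖ ≤ C * ‖d (hfun p)‖ * r^n := hscB _ n
      _ ≤ C * (p:ℝ) * r^n := by
        have h1 := h.1
        have hrn : (0:ℝ) ≤ r^n := by positivity
        exact mul_le_mul_of_nonneg_right (mul_le_mul_of_nonneg_left h1 hC0.le) hrn
    · simp only [hw, if_neg h]
      simp only [norm_zero]
      positivity
  have hyk : ∀ p k, p ≤ k → (T^k) (y p) = 0 := by
    intro p k hk
    by_cases h : ok p
    · simp only [hy, if_pos h]
      exact hker _ _ (le_trans h.2.1 hk)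
    · simp [hy, if_neg h]
  have hyB : ∀ p, ‖y p‖ ≤ (p:ℝ) := by
    intro p
    by_cases h : ok p
    · simpa [hy, if_pos h] using h.1
    · simp [hy, if_neg h]
  have hyhit : ∀ j B : ℕ, ∃ p, B ≤ p ∧ 1 ≤ p ∧ y p = d j := by
    intro j B
    obtain ⟨K, hK⟩ := exists_nat_ge (‖d j‖)
    obtain ⟨p, hp1, hp2⟩ := hhit j (B + 1 + mj j + K)
    have hB : B ≤ p := by omega
    have h1 : 1 ≤ p := by omega
    have hmm : mj j ≤ p := by omega
    have hKp : K ≤ p := by omega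
    have hokp : ok p := by
      refine ⟨?_, ?_, h1⟩
      · rw [hp2]
        calc ‖d j‖ ≤ (K:ℝ) := hK
        _ ≤ (p:ℝ) := by exact_mod_cast hKp
      · rw [hp2]; exact hmm
    exact ⟨p, hB, h1, by rw [hy]; simp only [if_pos hokp, hp2]⟩
  -- the candidate vector
  set f : ℕ × ℕ → X := fun pn => if pn.2 ∈ Aset pn.1 ∧ 1 ≤ pn.1 then w pn.1 pn.2 else 0 with hf
  set u : ℕ → ℝ := fun p => C * p * ρ^p with hu
  have hu0 : ∀ p, 0 ≤ u p := fun p => by simp only [hu]; positivity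
  have husum : Summable u := by
    have h1 := summable_pow_mul_geometric_of_norm_lt_one (R := ℝ) 1
      (by rwa [Real.norm_of_nonneg hρ0.le] : ‖ρ‖ < 1)
    refine (h1.mul_left C).congr fun p => ?_
    simp only [hu, pow_one]; ring
  have hgeoρ : Summable (fun n : ℕ => ρ^n) := summable_geometric_of_lt_one hρ0.le hρ1
  have hfB : ∀ pn : ℕ × ℕ, ‖f pn‖ ≤ u pn.1 * ρ^pn.2 := by
    rintro ⟨p, n⟩
    simp only [hf]
    by_cases h : n ∈ Aset p ∧ 1 ≤ p
    · rw [if_pos h]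
      have hpn : p ≤ n := Aset_ge h.1
      have h2 : r^n = ρ^(2*n) := by rw [pow_mul, hρ2]
      have h3 : ρ^(2*n) ≤ ρ^(n+p) := pow_le_pow_of_le_one hρ0.le hρ1.le (by omega)
      calc ‖w p n‖ ≤ C * (p:ℝ) * r^n := hwB p n
      _ = C * p * ρ^(2*n) := by rw [h2]
      _ ≤ C * p * ρ^(n+p) :=
          mul_le_mul_of_nonneg_left h3 (by positivity)
      _ = u p * ρ^n := by simp only [hu]; rw [pow_add]; ring
    · rw [if_neg h]
      simp only [norm_zero]
      have := hu0 p
      positivity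
  have hfns : Summable (fun pn : ℕ × ℕ => ‖f pn‖) := by
    apply Summable.of_nonneg_of_le (fun _ => norm_nonneg _) hfB
    exact husum.mul_of_nonneg hgeoρ hu0 (fun n => by positivity)
  have hfs : Summable f := hfns.of_norm
  set xv : X := ∑' pn, f pn with hxv
  set Qv : ℝ := ∑' p, u p with hQv
  have hQv0 : 0 ≤ Qv := tsum_nonneg hu0
  have h1ρ : (0:ℝ) < 1 - ρ := by linarith
  set M : ℝ := Qv * (1-ρ)⁻¹ with hM
  have hM0 : 0 ≤ M := mul_nonneg hQv0 (by positivity)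
  have horb : ∀ p k, 1 ≤ p → k ∈ Aset p → ‖(T^k) xv - y p‖ ≤ M * ρ^p := by
    intro p k hp1 hk
    set g : ℕ × ℕ → X := fun pn => (T^k) (f pn) with hg
    have hgs : Summable g := by
      exact hfs.map (AddMonoidHom.mk' (⇑(T^k)) (fun a b => map_add _ a b)) (T^k).continuous
    have hmap1 : (T^k) xv = ∑' pn, g pn := by rw [hxv]; exact (T^k).map_tsum hfs
    have hgpk : g (p, k) = y p := by
      simp only [hg, hf]
      rw [if_pos ⟨hk, hp1⟩]
      have h5 := hwI p 0 k
      rw [zero_add] at h5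
      rw [h5, hw0]
    have hsplit := Summable.tsum_eq_add_tsum_ite hgs (p, k)
    set v : ℕ → ℝ := fun n => if k < n then ρ^(n-k) else 0 with hv
    have hv0 : ∀ n, 0 ≤ v n := by
      intro n; simp only [hv]
      by_cases h : k < n
      · rw [if_pos h]; positivity
      · rw [if_neg h]
    have hvs : Summable v := by
      apply (summable_nat_add_iff (k+1)).1
      refine (hgeoρ.mul_left ρ).congr fun n => ?_
      simp only [hv]
      rw [if_pos (by omega : k < n + (k+1))]
      rw [show n + (k+1) - k = n+1 by omega, pow_succ']
    have hvt : ∑' n, v n ≤ (1-ρ)⁻¹ := by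
      have hsplit2 := (Summable.sum_add_tsum_nat_add (k+1) hvs).symm
      have hzero : ∑ i ∈ Finset.range (k+1), v i = 0 := by
        apply Finset.sum_eq_zero
        intro i hi
        rw [Finset.mem_range] at hi
        simp only [hv]
        rw [if_neg (by omega)]
      have hshift : ∀ n : ℕ, v (n + (k+1)) = ρ * ρ^n := by
        intro n
        simp only [hv]
        rw [if_pos (by omega : k < n + (k+1))]
        rw [show n + (k+1) - k = n+1 by omega, pow_succ']
      calc ∑' n, v n = ∑ i ∈ Finset.range (k+1), v i + ∑' n, v (n+(k+1)) := hsplit2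
      _ = ∑' n, ρ * ρ^n := by rw [hzero, zero_add]; exact tsum_congr hshift
      _ = ρ * ∑' n, ρ^n := tsum_mul_left
      _ = ρ * (1-ρ)⁻¹ := by rw [tsum_geometric_of_lt_one hρ0.le hρ1]
      _ ≤ (1-ρ)⁻¹ := mul_le_of_le_one_left (by positivity) hρ1.le
    set Bnd : ℕ × ℕ → ℝ := fun pn => (u pn.1 * ρ^p) * v pn.2 with hB
    have hBs : Summable Bnd :=
      (husum.mul_right (ρ^p)).mul_of_nonneg hvs
        (fun q => mul_nonneg (hu0 q) (by positivity)) hv0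
    have hterm : ∀ pn : ℕ × ℕ, ‖(if pn = (p,k) then 0 else g pn)‖ ≤ Bnd pn := by
      rintro ⟨q, n⟩
      have hBnn : 0 ≤ Bnd (q, n) :=
        mul_nonneg (mul_nonneg (hu0 q) (by positivity)) (hv0 n)
      by_cases he : (q, n) = (p, k)
      · rw [if_pos he]; simpa using hBnn
      · rw [if_neg he]
        simp only [hg, hf]
        by_cases hc : n ∈ Aset q ∧ 1 ≤ q
        · rw [if_pos hc]
          rcases Nat.lt_trichotomy n k with hnk | hnk | hnk
          · have hsep := Aset_sep hc.2 hp1 hc.1 hk hnk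
            have hzero : (T^k) (w q n) = 0 := by
              have hsp : T^k = T^(k-n) * T^n := by rw [← pow_add]; congr 1; omega
              rw [hsp, ContinuousLinearMap.mul_apply]
              have h4 : (T^n) (w q n) = y q := by
                have h6 := hwI q 0 n
                rw [zero_add] at h6
                rw [h6, hw0]
              rw [h4]
              exact hyk q (k-n) (by omega)
            rw [hzero]; simpa using hBnn
          · exfalso
            subst hnk
            exact he (by rw [Aset_disj hc.2 hp1 hc.1 hk])
          · have hsep := Aset_sep hp1 hc.2 hk hc.1 hnk
            have hval : (T^k) (w q n) = w q (n-k) := by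
              have h7 := hwI q (n-k) k
              rwa [show n - k + k = n by omega] at h7
            rw [hval]
            calc ‖w q (n-k)‖ ≤ C * (q:ℝ) * r^(n-k) := hwB q (n-k)
            _ = C * q * ρ^(2*(n-k)) := by rw [pow_mul, hρ2]
            _ ≤ C * q * ρ^((n-k) + p + q) :=
                mul_le_mul_of_nonneg_left
                  (pow_le_pow_of_le_one hρ0.le hρ1.le (by omega)) (by positivity)
            _ = Bnd (q, n) := by
                simp only [hB, hu, hv]
                rw [if_pos hnk]
                rw [pow_add, pow_add]; ring
        · rw [if_neg hc, map_zero]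
          simpa using hBnn
    have hterms : Summable (fun pn : ℕ×ℕ => ‖(if pn = (p,k) then 0 else g pn)‖) :=
      Summable.of_nonneg_of_le (fun _ => norm_nonneg _) hterm hBs
    have htB : ∑' pn : ℕ×ℕ, Bnd pn ≤ (Qv * ρ^p) * (1-ρ)⁻¹ := by
      rw [Summable.tsum_prod' hBs (fun q => (hvs.mul_left (u q * ρ^p)).congr (fun n => rfl))]
      have hrow : ∀ q, (∑' n, Bnd (q, n)) = (u q * ρ^p) * ∑' n, v n := by
        intro q; simp only [hB]; exact tsum_mul_left
      calc ∑' q, ∑' n, Bnd (q,n) = ∑' q, (u q * ρ^p) * ∑' n, v n := tsum_congr hrow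
      _ = (∑' q, u q * ρ^p) * ∑' n, v n := tsum_mul_right
      _ = (Qv * ρ^p) * ∑' n, v n := by rw [hQv, tsum_mul_right]
      _ ≤ (Qv * ρ^p) * (1-ρ)⁻¹ := by
          apply mul_le_mul_of_nonneg_left hvt
          positivity
    have hfinal : (T^k) xv - y p = ∑' pn : ℕ×ℕ, (if pn = (p,k) then 0 else g pn) := by
      rw [hmap1, hsplit, hgpk]; abel
    rw [hfinal]
    calc ‖∑' pn : ℕ×ℕ, (if pn = (p,k) then 0 else g pn)‖
        ≤ ∑' pn : ℕ×ℕ, ‖(if pn = (p,k) then 0 else g pn)‖ := norm_tsum_le_tsum_norm hterms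
    _ ≤ ∑' pn : ℕ×ℕ, Bnd pn := Summable.tsum_le_tsum hterm hterms hBs
    _ ≤ (Qv * ρ^p) * (1-ρ)⁻¹ := htB
    _ = M * ρ^p := by rw [hM]; ring
  have hitereq : ∀ (k : ℕ) (z : X), (fun y : X => T y)^[k] z = (T^k) z := by
    intro k z
    exact (pow_apply_iter T k z).symm
  -- each A p is sent into U for a suitable p
  have hvisitU : ∀ U : Set X, IsOpen U → U.Nonempty →
      (∃ p, 1 ≤ p ∧ ∀ k, k ∈ Aset p → (fun y : X => T y)^[k] xv ∈ U) := by
    intro U hUo hUne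
    obtain ⟨u0, hu0U⟩ := hUne
    obtain ⟨ε, hε0, hball⟩ := Metric.isOpen_iff.1 hUo u0 hu0U
    obtain ⟨j, hj⟩ := hdR.exists_dist_lt u0 (half_pos hε0)
    obtain ⟨B, hB⟩ := exists_pow_lt_of_lt_one (x := ε/2/(M+1)) (by positivity) hρ1
    obtain ⟨p, hpB, hp1, hyp⟩ := hyhit j B
    refine ⟨p, hp1, ?_⟩
    intro k hk
    have h1 : ‖(T^k) xv - d j‖ ≤ M * ρ^p := by rw [← hyp]; exact horb p k hp1 hk
    have hρmono : ρ^p ≤ ρ^B := pow_le_pow_of_le_one hρ0.le hρ1.le hpB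
    have h2 : M * ρ^p < ε/2 := by
      have h3 : M * ρ^p ≤ (M+1) * ρ^B := by
        nlinarith [pow_nonneg hρ0.le p, pow_nonneg hρ0.le B]
      have h4 : (M+1) * ρ^B < (M+1) * (ε/2/(M+1)) :=
        mul_lt_mul_of_pos_left hB (by linarith)
      have h5 : (M+1) * (ε/2/(M+1)) = ε/2 := by field_simp
      linarith
    apply hball
    rw [Metric.mem_ball, hitereq]
    calc dist ((T^k) xv) u0 ≤ dist ((T^k) xv) (d j) + dist (d j) u0 := dist_triangle _ _ _
    _ < ε/2 + ε/2 := by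
        apply add_lt_add_of_le_of_lt
        · rw [dist_eq_norm]; exact le_of_lt (lt_of_le_of_lt h1 h2)
        · rw [dist_comm]; exact hj
    _ = ε := add_halves ε
  -- positive lower density of visiting times
  have hliminf : ∀ U : Set X, IsOpen U → U.Nonempty →
      0 < liminf (fun N : ℕ =>
        (((Finset.range N).filter (fun k => (fun y : X => T y)^[k] xv ∈ U)).card : ℝ) / (N : ℝ))
        atTop := by
    intro U hUo hUne
    obtain ⟨p, hp1, hvis⟩ := hvisitU U hUo hUne
    obtain ⟨c, hc0, hev⟩ := Aset_count p hp1
    have hev2 : ∀ᶠ N in atTop, c ≤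
        (((Finset.range N).filter (fun k => (fun y : X => T y)^[k] xv ∈ U)).card : ℝ)/(N:ℝ) := by
      filter_upwards [hev] with N hN
      exact hN _ _ (fun n _ hn => hvis n hn)
    have hbdd : IsBoundedUnder (· ≤ ·) atTop (fun N : ℕ =>
        (((Finset.range N).filter (fun k => (fun y : X => T y)^[k] xv ∈ U)).card : ℝ)/(N:ℝ)) := by
      apply isBoundedUnder_of
      refine ⟨1, fun N => ?_⟩
      rcases Nat.eq_zero_or_pos N with rfl | hN0
      · simp
      · apply div_le_one_of_le₀
        · have h6 : ((Finset.range N).filter (fun k => (fun y : X => T y)^[k] xv ∈ U)).card ≤ N := by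
            calc _ ≤ (Finset.range N).card := Finset.card_filter_le _ _
            _ = N := Finset.card_range N
          exact_mod_cast h6
        · positivity
    exact lt_of_lt_of_le hc0 (le_liminf_of_le hbdd.isCoboundedUnder_ge hev2)
  -- visits at arbitrarily large times
  have hvisit2 : ∀ (V : Set X), IsOpen V → V.Nonempty → ∀ i : ℕ,
      ∃ k, i ≤ k ∧ (fun y : X => T y)^[k] xv ∈ V := by
    intro V hVo hVne i
    by_contra hcon
    push_neg at hcon
    have hsub : ∀ N : ℕ,
        (((Finset.range N).filter (fun k => (fun y : X => T y)^[k] xv ∈ V)).card : ℝ) ≤ (i:ℝ) := by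
      intro N
      have h7 : (Finset.range N).filter (fun k => (fun y : X => T y)^[k] xv ∈ V) ⊆
          Finset.range i := by
        intro k hkmem
        rw [Finset.mem_filter] at hkmem
        rw [Finset.mem_range]
        by_contra hki
        exact hcon k (by omega) hkmem.2
      have h8 := Finset.card_le_card h7
      rw [Finset.card_range] at h8
      exact_mod_cast h8
    have hle : ∀ᶠ N : ℕ in atTop,
        (((Finset.range N).filter (fun k => (fun y : X => T y)^[k] xv ∈ V)).card : ℝ)/(N:ℝ)
          ≤ (i:ℝ)/(N:ℝ) := by
      filter_upwards [eventually_gt_atTop 0] with N hN0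
      have hNR : (0:ℝ) ≤ (N:ℝ) := by positivity
      exact div_le_div_of_nonneg_right (hsub N) hNR
    have htend : Tendsto (fun N : ℕ => (i:ℝ)/(N:ℝ)) atTop (nhds 0) :=
      tendsto_const_div_atTop_nhds_zero_nat (i:ℝ)
    have hlim0 : liminf (fun N : ℕ => (i:ℝ)/(N:ℝ)) atTop = 0 := htend.liminf_eq
    have hbdd2 : IsBoundedUnder (· ≥ ·) atTop (fun N : ℕ =>
        (((Finset.range N).filter (fun k => (fun y : X => T y)^[k] xv ∈ V)).card : ℝ)/(N:ℝ)) := by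
      apply isBoundedUnder_of
      exact ⟨0, fun N => by positivity⟩
    have hco2 : IsCoboundedUnder (· ≥ ·) atTop (fun N : ℕ => (i:ℝ)/(N:ℝ)) :=
      htend.isBoundedUnder_le.isCoboundedUnder_ge
    have hmono := liminf_le_liminf hle hbdd2 hco2
    rw [hlim0] at hmono
    have h9 := hliminf V hVo hVne
    linarith
  refine ⟨⟨xv, hliminf⟩, ?_, ?_⟩
  · -- transitivity
    intro U V hUo hVo hUne hVne
    obtain ⟨a, _, haU⟩ := hvisit2 U hUo hUne 0
    obtain ⟨b, hab, hbV⟩ := hvisit2 V hVo hVne a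
    refine ⟨b - a, ⟨(fun y : X => T y)^[b] xv, ⟨(fun y : X => T y)^[a] xv, haU, ?_⟩, hbV⟩⟩
    rw [← Function.iterate_add_apply]
    congr 1
    omega
  · -- dense periodic points
    rw [Metric.dense_iff]
    intro x0 ε hε0
    obtain ⟨j, hj⟩ := hdR.exists_dist_lt x0 (half_pos hε0)
    have h1r : (0:ℝ) < 1 - r := by linarith
    set K : ℝ := C * ‖d j‖ * (1-r)⁻¹ + 1 with hK
    have hKc : 0 ≤ C * ‖d j‖ * (1-r)⁻¹ :=
      mul_nonneg (mul_nonneg hC0.le (norm_nonneg _)) (by positivity)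
    have hK0 : 0 < K := by rw [hK]; linarith
    obtain ⟨B, hB⟩ := exists_pow_lt_of_lt_one (x := ε/2/K) (by positivity) hr1
    set N := max B (max 1 (mj j)) with hN
    have hN1 : 1 ≤ N := le_trans (le_max_left 1 _) (le_max_right B _)
    have hNm : mj j ≤ N := le_trans (le_max_right 1 _) (le_max_right B _)
    have hNB : B ≤ N := le_max_left _ _
    have hrN : r^N ≤ r^B := pow_le_pow_of_le_one hr0.le hr1.le hNB
    have hrN1 : r^N < 1 := pow_lt_one₀ hr0.le hr1 (by omega)
    have hrN0 : (0:ℝ) ≤ r^N := by positivity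
    have hbnd : ∀ k : ℕ, ‖sc j (k*N)‖ ≤ (C*‖d j‖) * (r^N)^k := by
      intro k
      calc ‖sc j (k*N)‖ ≤ C*‖d j‖*r^(k*N) := hscB j (k*N)
      _ = (C*‖d j‖) * (r^N)^k := by rw [mul_comm k N, pow_mul]
    have hsummz : Summable (fun k : ℕ => sc j (k*N)) := by
      apply Summable.of_norm_bounded ((summable_geometric_of_lt_one hrN0 hrN1).mul_left (C*‖d j‖)) hbnd
    set z : X := ∑' k, sc j (k*N) with hz
    have hTNz : (fun y : X => T y)^[N] z = z := by
      rw [hitereq]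
      rw [hz, (T^N).map_tsum hsummz]
      have hgsum : Summable (fun k : ℕ => (T^N) (sc j (k*N))) :=
        hsummz.map (AddMonoidHom.mk' (⇑(T^N)) (fun a b => map_add _ a b)) (T^N).continuous
      rw [Summable.tsum_eq_zero_add hgsum]
      have h0z : (T^N) (sc j (0*N)) = 0 := by
        rw [Nat.zero_mul, hsc0]
        exact hker j N hNm
      have hsucc : ∀ k : ℕ, (T^N) (sc j ((k+1)*N)) = sc j (k*N) := by
        intro k
        have h10 := hscI j (k*N) N
        rwa [show k*N + N = (k+1)*N by ring] at h10
      rw [h0z, zero_add]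
      exact tsum_congr hsucc
    have hst : Summable (fun k : ℕ => sc j ((k+1)*N)) := by
      apply (summable_nat_add_iff 1).2 hsummz
    have hbnd2 : ∀ k : ℕ, ‖sc j ((k+1)*N)‖ ≤ (C*‖d j‖*r^N) * (r^N)^k := by
      intro k
      calc ‖sc j ((k+1)*N)‖ ≤ (C*‖d j‖) * (r^N)^(k+1) := hbnd (k+1)
      _ = (C*‖d j‖*r^N) * (r^N)^k := by rw [pow_succ]; ring
    have hnorms : Summable (fun k : ℕ => ‖sc j ((k+1)*N)‖) :=
      Summable.of_nonneg_of_le (fun _ => norm_nonneg _) hbnd2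
        ((summable_geometric_of_lt_one hrN0 hrN1).mul_left _)
    have htail : ‖z - d j‖ ≤ C*‖d j‖*r^N * (1-r^N)⁻¹ := by
      have hz2 : z = d j + ∑' k, sc j ((k+1)*N) := by
        rw [hz, Summable.tsum_eq_zero_add hsummz, Nat.zero_mul, hsc0]
      calc ‖z - d j‖ = ‖∑' k, sc j ((k+1)*N)‖ := by rw [hz2]; simp
      _ ≤ ∑' k, ‖sc j ((k+1)*N)‖ := norm_tsum_le_tsum_norm hnorms
      _ ≤ ∑' k, (C*‖d j‖*r^N) * (r^N)^k :=
          Summable.tsum_le_tsum hbnd2 hnorms ((summable_geometric_of_lt_one hrN0 hrN1).mul_left _)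
      _ = (C*‖d j‖*r^N) * (1-r^N)⁻¹ := by
          rw [tsum_mul_left, tsum_geometric_of_lt_one hrN0 hrN1]
    have hless : C*‖d j‖*r^N * (1-r^N)⁻¹ < ε/2 := by
      have h11 : (1-r^N)⁻¹ ≤ (1-r)⁻¹ := by
        apply inv_anti₀ h1r
        have : r^N ≤ r := by
          calc r^N ≤ r^1 := pow_le_pow_of_le_one hr0.le hr1.le hN1
          _ = r := pow_one r
        linarith
      have h12 : C*‖d j‖*r^N * (1-r^N)⁻¹ ≤ (C*‖d j‖*(1-r)⁻¹) * r^N := by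
        have := mul_le_mul_of_nonneg_left h11
          (mul_nonneg (mul_nonneg hC0.le (norm_nonneg (d j))) hrN0)
        calc C*‖d j‖*r^N * (1-r^N)⁻¹ ≤ C*‖d j‖*r^N * (1-r)⁻¹ := this
        _ = (C*‖d j‖*(1-r)⁻¹) * r^N := by ring
      have h13 : (C*‖d j‖*(1-r)⁻¹) * r^N ≤ K * r^B := by
        apply mul_le_mul (by rw [hK]; linarith) hrN hrN0 hK0.le
      have h14 : K * r^B < K * (ε/2/K) := mul_lt_mul_of_pos_left hB hK0
      have h15 : K * (ε/2/K) = ε/2 := by field_simp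
      linarith
    have hdist : dist z x0 < ε := by
      calc dist z x0 ≤ dist z (d j) + dist (d j) x0 := dist_triangle _ _ _
      _ < ε/2 + ε/2 := by
          apply add_lt_add_of_le_of_lt
          · rw [dist_eq_norm]; exact le_of_lt (lt_of_le_of_lt htail hless)
          · rw [dist_comm]; exact hj
      _ = ε := add_halves ε
    exact ⟨z, Metric.mem_ball.2 hdist, ⟨N, by omega, hTNz⟩⟩
end

section
/- Let $m$ be a Borel probability measure on $\mathbb{R}$ with exponential tails: $m(\{x : |x| > z\}) \leq C\gamma^z$ for some $C > 0$, $0 < \gamma < 1$, and all $z > 0$. Let $(d_n)$ be positive reals such that $((\log n)/d_n)_{n\geq 2} \in \ell^p(\mathbb{R})$. Then for every $\epsilon > 0$ there exists $(\kappa_n) \in \ell^p(\mathbb{R})$ of positive numbers with $\sum_{n=1}^\infty m(\{x : |x| > d_n\kappa_n\}) < \epsilon$. -/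
open MeasureTheory

theorem stmt13 (m : Measure ℝ) [IsProbabilityMeasure m]
    (C γ : ℝ) (hC : 0 < C) (hγ0 : 0 < γ) (hγ1 : γ < 1)
    (htail : ∀ z : ℝ, 0 < z → m {x : ℝ | z < |x|} ≤ ENNReal.ofReal (C * γ ^ z))
    (p : ℝ) (hp : 1 ≤ p)
    (d : ℕ → ℝ) (hd : ∀ n, 0 < d n)
    (hlog : Memℓp (fun n : ℕ => Real.log ((n : ℝ) + 2) / d n) (ENNReal.ofReal p)) :
    ∀ ε : ℝ, 0 < ε → ∃ κ : ℕ → ℝ,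
      (∀ n, 0 < κ n) ∧ Memℓp κ (ENNReal.ofReal p) ∧
      (∑' n : ℕ, m {x : ℝ | d n * κ n < |x|}) < ENNReal.ofReal ε := by
  intro ε hε
  have hlogγ : Real.log γ < 0 := Real.log_neg hγ0 hγ1
  have hnpos : ∀ n : ℕ, (0:ℝ) < (n:ℝ) + 2 := fun n => by positivity
  have hn1 : ∀ n : ℕ, (1:ℝ) < (n:ℝ) + 2 := fun n => by
    have : (0:ℝ) ≤ (n:ℝ) := Nat.cast_nonneg n
    linarith
  set g : ℕ → ℝ := fun n => ((n:ℝ) + 2) ^ (-(2:ℝ)) with hg_def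
  have hg_nonneg : ∀ n, 0 ≤ g n := fun n => Real.rpow_nonneg (hnpos n).le _
  have hg_summable : Summable g := by
    have h1 : Summable (fun n : ℕ => ((n:ℝ)) ^ (-(2:ℝ))) := by
      rw [Real.summable_nat_rpow]; norm_num
    have h2 := (summable_nat_add_iff 2).2 h1
    refine h2.congr fun n => ?_
    push_cast
    rfl
  set S : ℝ := ∑' n, g n with hS_def
  have hS0 : 0 ≤ S := tsum_nonneg hg_nonneg
  obtain ⟨k, hk⟩ : ∃ k : ℕ, C * S / ε < 2 ^ k :=
    pow_unbounded_of_one_lt _ (by norm_num : (1:ℝ) < 2)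
  have hCS : C * S < 2 ^ k * ε := by rwa [div_lt_iff₀ hε] at hk
  set s : ℝ := 2 + k with hs_def
  have hs_pos : 0 < s := by positivity
  set B : ℝ := s / (-Real.log γ) with hB_def
  have hB : 0 < B := div_pos hs_pos (by linarith)
  have hBlogγ : B * Real.log γ = -s := by
    rw [hB_def, div_mul_eq_mul_div, div_eq_iff (by linarith : -Real.log γ ≠ 0)]
    ring
  -- the sequence κ
  refine ⟨fun n => B * (Real.log ((n:ℝ) + 2) / d n), ?_, ?_, ?_⟩
  · intro n
    have hl : 0 < Real.log ((n:ℝ) + 2) := Real.log_pos (hn1 n)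
    exact mul_pos hB (div_pos hl (hd n))
  · exact hlog.const_mul B
  · -- sum estimate
    have hdk : ∀ n : ℕ, d n * (B * (Real.log ((n:ℝ) + 2) / d n)) =
        B * Real.log ((n:ℝ) + 2) := by
      intro n
      field_simp
      exact mul_div_cancel_left₀ _ (hd n).ne'
    have hzpos : ∀ n : ℕ, 0 < B * Real.log ((n:ℝ) + 2) :=
      fun n => mul_pos hB (Real.log_pos (hn1 n))
    -- rewrite γ ^ (B * log (n+2)) as (n+2) ^ (-s)
    have hγrw : ∀ n : ℕ, γ ^ (B * Real.log ((n:ℝ) + 2)) = ((n:ℝ) + 2) ^ (-s) := by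
      intro n
      rw [Real.rpow_def_of_pos hγ0, Real.rpow_def_of_pos (hnpos n)]
      congr 1
      rw [← hBlogγ]
      ring
    set F : ℕ → ℝ := fun n => C * ((n:ℝ) + 2) ^ (-s) with hF_def
    have hF_nonneg : ∀ n, 0 ≤ F n :=
      fun n => mul_nonneg hC.le (Real.rpow_nonneg (hnpos n).le _)
    -- pointwise bound F n ≤ (C * (2^k)⁻¹) * g n
    have hF_le : ∀ n, F n ≤ (C * ((2:ℝ) ^ k)⁻¹) * g n := by
      intro n
      have hsplit : ((n:ℝ) + 2) ^ (-s) = ((n:ℝ) + 2) ^ (-(2:ℝ)) * ((n:ℝ) + 2) ^ (-(k:ℝ)) := by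
        rw [← Real.rpow_add (hnpos n)]
        congr 1
        rw [hs_def]; ring
      have h2k : ((n:ℝ) + 2) ^ (-(k:ℝ)) ≤ ((2:ℝ) ^ k)⁻¹ := by
        rw [Real.rpow_neg (hnpos n).le]
        have h1 : (2:ℝ) ^ k ≤ ((n:ℝ) + 2) ^ (k:ℝ) := by
          rw [← Real.rpow_natCast 2 k]
          exact Real.rpow_le_rpow (by norm_num) (by linarith [Nat.cast_nonneg (α := ℝ) n])
            (Nat.cast_nonneg k)
        have h2 : (0:ℝ) < 2 ^ k := by positivity
        rw [Real.rpow_natCast] at h1 ⊢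
        exact inv_anti₀ h2 h1
      calc F n = C * (((n:ℝ) + 2) ^ (-(2:ℝ)) * ((n:ℝ) + 2) ^ (-(k:ℝ))) := by
            simp only [hF_def]
            rw [hsplit]
        _ ≤ C * (((n:ℝ) + 2) ^ (-(2:ℝ)) * ((2:ℝ) ^ k)⁻¹) := by
            apply mul_le_mul_of_nonneg_left _ hC.le
            exact mul_le_mul_of_nonneg_left h2k (Real.rpow_nonneg (hnpos n).le _)
        _ = (C * ((2:ℝ) ^ k)⁻¹) * g n := by rw [hg_def]; ring
    have hh_summable : Summable (fun n => (C * ((2:ℝ) ^ k)⁻¹) * g n) :=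
      hg_summable.mul_left _
    have hF_summable : Summable F :=
      Summable.of_nonneg_of_le hF_nonneg hF_le hh_summable
    have htsumF : (∑' n, F n) < ε := by
      have h1 : (∑' n, F n) ≤ ∑' n, (C * ((2:ℝ) ^ k)⁻¹) * g n :=
        Summable.tsum_le_tsum hF_le hF_summable hh_summable
      have h2 : (∑' n, (C * ((2:ℝ) ^ k)⁻¹) * g n) = C * ((2:ℝ) ^ k)⁻¹ * S := by
        rw [tsum_mul_left]
      have h3 : C * ((2:ℝ) ^ k)⁻¹ * S < ε := by
        rw [mul_comm C, mul_assoc, inv_mul_lt_iff₀ (by positivity : (0:ℝ) < 2 ^ k)]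
        linarith
      calc (∑' n, F n) ≤ C * ((2:ℝ) ^ k)⁻¹ * S := h1.trans_eq h2
        _ < ε := h3
    calc (∑' n : ℕ, m {x : ℝ | d n * (B * (Real.log ((n:ℝ) + 2) / d n)) < |x|})
        ≤ ∑' n : ℕ, ENNReal.ofReal (F n) := by
          apply ENNReal.tsum_le_tsum
          intro n
          rw [hdk n]
          have := htail _ (hzpos n)
          rwa [hγrw n] at this
      _ = ENNReal.ofReal (∑' n, F n) :=
          (ENNReal.ofReal_tsum_of_nonneg hF_nonneg hF_summable).symm
      _ < ENNReal.ofReal ε := by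
          exact (ENNReal.ofReal_lt_ofReal_iff hε).2 htsumF
end

section
/- Let $X = \ell^p(\mathbb{R})$, let $L$ be a weighted shift with weights $\alpha_n \in (c,c')$ satisfying $d := \sum_{n\geq 1}(d_n)^{-\alpha} < \infty$ where $d_n = \inf_k \beta_k^n$, and let $A$ be bounded and $\alpha$-Hölder. For $s \in (0,1)$ define $\mathcal{T}_{s,A}(u)(x) = \log\int_{\mathbb{R}} e^{A(r, x_1/\alpha_1, x_2/\alpha_2,\dots) + s\,u(r, x_1/\alpha_1,\dots)}\,dm(r)$ on bounded continuous functions, where $m$ is a Borel probability measure on $\mathbb{R}$. Then $\mathcal{T}_{s,A}$ maps $\mathcal{C}_b(X)$ to itself and satisfies $\|\mathcal{T}_{s,A}(u_1) - \mathcal{T}_{s,A}(u_2)\|_\infty \leq s\|u_1 - u_2\|_\infty$; hence it has a unique fixed point $u_s \in \mathcal{C}_b(X)$. -/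
set_option maxHeartbeats 1000000
set_option synthInstance.maxHeartbeats 400000


open MeasureTheory BoundedContinuousFunction

theorem stmt14 (p : ENNReal) [Fact (1 ≤ p)] (hp : p ≠ ⊤)
    (c c' : ℝ) (hc : 0 < c) (hcc : c < c')
    (α : ℕ → ℝ) (hα : ∀ n, α n ∈ Set.Ioo c c')
    (a : ℝ) (ha0 : 0 < a) (ha1 : a ≤ 1)
    (hd : Summable fun n => (dseq α (n + 1))⁻¹ ^ a)
    (m : Measure ℝ) [IsProbabilityMeasure m]
    (A : lp (fun _ : ℕ => ℝ) p →ᵇ ℝ) (K : ℝ)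
    (hA : ∀ x y : lp (fun _ : ℕ => ℝ) p, |A x - A y| ≤ K * ‖x - y‖ ^ a)
    -- `ι r x` is the preimage `(r, x₁/α₁, x₂/α₂, …)` of `x` under the weighted shift
    (ι : ℝ → lp (fun _ : ℕ => ℝ) p → lp (fun _ : ℕ => ℝ) p)
    (hι : ∀ (r : ℝ) (x : lp (fun _ : ℕ => ℝ) p) (n : ℕ),
      (ι r x : ∀ _ : ℕ, ℝ) n = if n = 0 then r else (x : ∀ _ : ℕ, ℝ) (n - 1) / α (n - 1))
    (hιcont : Continuous fun q : ℝ × lp (fun _ : ℕ => ℝ) p => ι q.1 q.2)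
    (s : ℝ) (hs0 : 0 < s) (hs1 : s < 1) :
    ∃ T : (lp (fun _ : ℕ => ℝ) p →ᵇ ℝ) → (lp (fun _ : ℕ => ℝ) p →ᵇ ℝ),
      (∀ (u : lp (fun _ : ℕ => ℝ) p →ᵇ ℝ) (x : lp (fun _ : ℕ => ℝ) p),
        T u x = Real.log (∫ r : ℝ, Real.exp (A (ι r x) + s * u (ι r x)) ∂m)) ∧
      (∀ u₁ u₂ : lp (fun _ : ℕ => ℝ) p →ᵇ ℝ, ‖T u₁ - T u₂‖ ≤ s * ‖u₁ - u₂‖) ∧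
      (∃! u : lp (fun _ : ℕ => ℝ) p →ᵇ ℝ, T u = u) := by
  classical
  let Y := lp (fun _ : ℕ => ℝ) p
  -- integrand
  set F : (Y →ᵇ ℝ) → ℝ → Y → ℝ := fun u r x => Real.exp (A (ι r x) + s * u (ι r x)) with hF
  have hFcont : ∀ u : Y →ᵇ ℝ, Continuous fun q : ℝ × Y => F u q.1 q.2 := by
    intro u
    have h2 : Continuous fun q : ℝ × Y => u (ι q.1 q.2) := u.continuous.comp hιcont
    have h3 : Continuous fun q : ℝ × Y => A (ι q.1 q.2) := A.continuous.comp hιcont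
    have h1 : Continuous fun q : ℝ × Y => A (ι q.1 q.2) + s * u (ι q.1 q.2) :=
      h3.add (continuous_const.mul h2)
    exact h1.rexp
  have hFpos : ∀ u r x, 0 < F u r x := fun u r x => Real.exp_pos _
  have hFbound : ∀ (u : Y →ᵇ ℝ) (r : ℝ) (x : Y),
      Real.exp (-(‖A‖ + s * ‖u‖)) ≤ F u r x ∧ F u r x ≤ Real.exp (‖A‖ + s * ‖u‖) := by
    intro u r x
    have hA' := abs_le.1 (abs_le.2 ⟨neg_norm_le_apply A (ι r x), apply_le_norm A (ι r x)⟩)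
    have h1 : |A (ι r x)| ≤ ‖A‖ := (A.norm_coe_le_norm (ι r x))
    have h2 : |u (ι r x)| ≤ ‖u‖ := (u.norm_coe_le_norm (ι r x))
    have h1' := abs_le.1 h1
    have h2' := abs_le.1 h2
    constructor
    · apply Real.exp_le_exp.2
      nlinarith [h1'.1, h2'.1, hs0.le]
    · apply Real.exp_le_exp.2
      nlinarith [h1'.2, h2'.2, hs0.le]
  have hmeas : ∀ (u : Y →ᵇ ℝ) (x : Y), AEStronglyMeasurable (fun r => F u r x) m := by
    intro u x
    exact ((hFcont u).comp (continuous_id.prodMk continuous_const)).aestronglyMeasurable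
  have hint : ∀ (u : Y →ᵇ ℝ) (x : Y), Integrable (fun r => F u r x) m := by
    intro u x
    refine (integrable_const (Real.exp (‖A‖ + s * ‖u‖))).mono' (hmeas u x) ?_
    filter_upwards with r
    rw [Real.norm_eq_abs, abs_of_pos (hFpos u r x)]
    exact (hFbound u r x).2
  -- integral bounds
  have hIlb : ∀ (u : Y →ᵇ ℝ) (x : Y),
      Real.exp (-(‖A‖ + s * ‖u‖)) ≤ ∫ r, F u r x ∂m := by
    intro u x
    calc Real.exp (-(‖A‖ + s * ‖u‖))
        = ∫ _ : ℝ, Real.exp (-(‖A‖ + s * ‖u‖)) ∂m := by simp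
      _ ≤ ∫ r, F u r x ∂m :=
          integral_mono (integrable_const _) (hint u x) (fun r => (hFbound u r x).1)
  have hIub : ∀ (u : Y →ᵇ ℝ) (x : Y),
      ∫ r, F u r x ∂m ≤ Real.exp (‖A‖ + s * ‖u‖) := by
    intro u x
    calc ∫ r, F u r x ∂m
        ≤ ∫ _ : ℝ, Real.exp (‖A‖ + s * ‖u‖) ∂m :=
          integral_mono (hint u x) (integrable_const _) (fun r => (hFbound u r x).2)
      _ = Real.exp (‖A‖ + s * ‖u‖) := by simp
  have hIpos : ∀ (u : Y →ᵇ ℝ) (x : Y), 0 < ∫ r, F u r x ∂m := fun u x =>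
    lt_of_lt_of_le (Real.exp_pos _) (hIlb u x)
  -- continuity of x ↦ ∫ F u r x
  haveI hFC : FirstCountableTopology Y := by infer_instance
  have hcont : ∀ u : Y →ᵇ ℝ, Continuous fun x : Y => ∫ r, F u r x ∂m := by
    intro u
    refine continuous_of_dominated (F := fun (x : Y) (r : ℝ) => F u r x)
      (bound := fun _ => Real.exp (‖A‖ + s * ‖u‖)) (fun x => hmeas u x) ?_ ?_ ?_
    · intro x
      filter_upwards with r
      rw [Real.norm_eq_abs, abs_of_pos (hFpos u r x)]
      exact (hFbound u r x).2
    · exact integrable_const _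
    · filter_upwards with r
      have hr : Continuous fun x : Y => ι r x := hιcont.comp (Continuous.prodMk_right r)
      have h2 : Continuous fun x : Y => u (ι r x) := u.continuous.comp hr
      have h3 : Continuous fun x : Y => A (ι r x) := A.continuous.comp hr
      have h1 : Continuous fun x : Y => A (ι r x) + s * u (ι r x) :=
        h3.add (continuous_const.mul h2)
      exact h1.rexp
  -- define T
  have hTbound : ∀ (u : Y →ᵇ ℝ) (x : Y),
      ‖Real.log (∫ r, F u r x ∂m)‖ ≤ ‖A‖ + s * ‖u‖ := by
    intro u x
    rw [Real.norm_eq_abs, abs_le]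
    constructor
    · have := Real.log_le_log (Real.exp_pos _) (hIlb u x)
      rwa [Real.log_exp] at this
    · have := Real.log_le_log (hIpos u x) (hIub u x)
      rwa [Real.log_exp] at this
  have hTcont : ∀ u : Y →ᵇ ℝ, Continuous fun x : Y => Real.log (∫ r, F u r x ∂m) := by
    intro u
    exact (hcont u).log (fun x => (hIpos u x).ne')
  let T : (Y →ᵇ ℝ) → (Y →ᵇ ℝ) := fun u =>
    BoundedContinuousFunction.ofNormedAddCommGroup
      (fun x => Real.log (∫ r, F u r x ∂m)) (hTcont u) (‖A‖ + s * ‖u‖) (hTbound u)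
  have hTapp : ∀ (u : Y →ᵇ ℝ) (x : Y), T u x = Real.log (∫ r, F u r x ∂m) := fun u x => rfl
  -- contraction
  have hcontr : ∀ u₁ u₂ : Y →ᵇ ℝ, ‖T u₁ - T u₂‖ ≤ s * ‖u₁ - u₂‖ := by
    intro u₁ u₂
    apply BoundedContinuousFunction.norm_le (by positivity) |>.2
    intro x
    rw [BoundedContinuousFunction.coe_sub, Pi.sub_apply, hTapp, hTapp, Real.norm_eq_abs, abs_le]
    have key : ∀ v w : Y →ᵇ ℝ,
        Real.log (∫ r, F v r x ∂m) - Real.log (∫ r, F w r x ∂m) ≤ s * ‖v - w‖ := by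
      intro v w
      have hmono : ∫ r, F v r x ∂m ≤ Real.exp (s * ‖v - w‖) * ∫ r, F w r x ∂m := by
        rw [← integral_const_mul]
        refine integral_mono (hint v x) ((hint w x).const_mul _) (fun r => ?_)
        rw [hF]
        simp only
        rw [← Real.exp_add]
        apply Real.exp_le_exp.2
        have hvw : v (ι r x) - w (ι r x) ≤ ‖v - w‖ := by
          have := (v - w).norm_coe_le_norm (ι r x)
          rw [BoundedContinuousFunction.coe_sub, Pi.sub_apply, Real.norm_eq_abs] at this
          exact (abs_le.1 this).2
        nlinarith [hs0.le]
      have := Real.log_le_log (hIpos v x) hmono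
      rw [Real.log_mul (Real.exp_pos _).ne' (hIpos w x).ne', Real.log_exp] at this
      linarith
    refine ⟨?_, key u₁ u₂⟩
    have h := key u₂ u₁
    rw [norm_sub_rev] at h
    linarith
  -- Banach fixed point
  have hlip : LipschitzWith ⟨s, hs0.le⟩ T := by
    apply LipschitzWith.of_dist_le_mul
    intro u₁ u₂
    rw [dist_eq_norm, dist_eq_norm]
    exact hcontr u₁ u₂
  have hCW : ContractingWith ⟨s, hs0.le⟩ T := ⟨by exact_mod_cast hs1, hlip⟩
  refine ⟨T, hTapp, hcontr, hCW.fixedPoint T, hCW.fixedPoint_isFixedPt, fun u hu => ?_⟩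
  exact hCW.fixedPoint_unique hu
end

section
/- Let $(P, W)$ be a map on a set $\mathcal{P}$ with a metric $W$ bounded by 1, such that $W(P\mu, P\nu) \leq W(\mu,\nu)$ for all $\mu,\nu$, and such that for every pair $\mu,\nu$ with $W(\mu,\nu) > 0$ and every $\delta > 0$ there exist $n_0$ and $k$ with $W(P^{n+k}\mu, P^{n+k}\nu) \leq \theta(W(P^n\mu, P^n\nu))$ for all $n \geq n_0$, where $\theta(t) < t$ for $t > 0$ along the (monotone) limit. Then $\lim_{n\to\infty}W(P^n\mu, P^n\nu) = 0$ for all $\mu,\nu$; moreover if $(P^n\mu_0)_n$ has a convergent subsequence with limit $\mu^*$ and $P$ is continuous, then $P(\mu^*) = \mu^*$, $\mu^*$ is the unique fixed point of $P$, and $P^n\nu \to \mu^*$ for every $\nu$. -/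
open Filter

theorem stmt19 (Y : Type*) [MetricSpace Y]
    (hbdd : ∀ μ ν : Y, dist μ ν ≤ 1)
    (P : Y → Y)
    (hnonexp : ∀ μ ν : Y, dist (P μ) (P ν) ≤ dist μ ν)
    (θ : ℝ → ℝ) (hθmono : Monotone θ) (hθcont : Continuous θ)
    (hθlt : ∀ t : ℝ, 0 < t → θ t < t)
    (hcontr : ∀ μ ν : Y, 0 < dist μ ν → ∀ δ : ℝ, 0 < δ →
      ∃ n₀ k : ℕ, ∀ n ≥ n₀,
        dist (P^[n + k] μ) (P^[n + k] ν) ≤ θ (dist (P^[n] μ) (P^[n] ν))) :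
    (∀ μ ν : Y, Tendsto (fun n : ℕ => dist (P^[n] μ) (P^[n] ν)) atTop (nhds 0)) ∧
    (Continuous P →
      ∀ (μ₀ μstar : Y) (φ : ℕ → ℕ), StrictMono φ →
        Tendsto (fun k : ℕ => P^[φ k] μ₀) atTop (nhds μstar) →
        P μstar = μstar ∧
        (∀ ν : Y, Tendsto (fun n : ℕ => P^[n] ν) atTop (nhds μstar)) ∧
        (∀ μ' : Y, P μ' = μ' → μ' = μstar)) := by
  have key : ∀ μ ν : Y, Tendsto (fun n : ℕ => dist (P^[n] μ) (P^[n] ν)) atTop (nhds 0) := by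
    intro μ ν
    set d : ℕ → ℝ := fun n => dist (P^[n] μ) (P^[n] ν) with hd
    have hanti : Antitone d := antitone_nat_of_succ_le (fun n => by
      simp only [hd, Function.iterate_succ_apply']
      exact hnonexp _ _)
    have hbb : BddBelow (Set.range d) := ⟨0, by rintro x ⟨n, rfl⟩; exact dist_nonneg⟩
    have hL : Tendsto d atTop (nhds (⨅ n, d n)) := tendsto_atTop_ciInf hanti hbb
    set L := ⨅ n, d n with hLdef
    have hL0 : 0 ≤ L := le_ciInf fun n => dist_nonneg
    rcases eq_or_lt_of_le hL0 with h | h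
    · rwa [← h] at hL
    · exfalso
      have hμν : 0 < dist μ ν := lt_of_lt_of_le h (ciInf_le hbb 0)
      obtain ⟨n₀, k, hk⟩ := hcontr μ ν hμν 1 one_pos
      have h1 : Tendsto (fun n => d (n + k)) atTop (nhds L) :=
        hL.comp (tendsto_add_atTop_nat k)
      have h2 : Tendsto (fun n => θ (d n)) atTop (nhds (θ L)) :=
        (hθcont.tendsto L).comp hL
      have hle : L ≤ θ L :=
        le_of_tendsto_of_tendsto h1 h2 (eventually_atTop.2 ⟨n₀, hk⟩)
      exact absurd hle (not_le.2 (hθlt L h))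
  refine ⟨key, fun hP μ₀ μstar φ hφ hsub => ?_⟩
  have hfix : P μstar = μstar := by
    have h2 : Tendsto (fun k => dist (P (P^[φ k] μ₀)) (P^[φ k] μ₀)) atTop
        (nhds (dist (P μstar) μstar)) :=
      ((hP.tendsto μstar).comp hsub).dist hsub
    have h3 : Tendsto (fun k => dist (P (P^[φ k] μ₀)) (P^[φ k] μ₀)) atTop (nhds 0) := by
      have := (key (P μ₀) μ₀).comp hφ.tendsto_atTop
      simpa only [Function.comp_def, ← Function.iterate_succ_apply,
        Function.iterate_succ_apply'] using this
    have := tendsto_nhds_unique h2 h3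
    exact eq_of_dist_eq_zero this
  have hiter : ∀ n : ℕ, P^[n] μstar = μstar := fun n => Function.iterate_fixed hfix n
  refine ⟨hfix, fun ν => ?_, fun μ' hμ' => ?_⟩
  · rw [tendsto_iff_dist_tendsto_zero]
    have := key ν μstar
    simpa only [hiter] using this
  · have h1 : Tendsto (fun n : ℕ => dist (P^[n] μ') (P^[n] μstar)) atTop
        (nhds (dist μ' μstar)) := by
      have heq : ∀ n : ℕ, P^[n] μ' = μ' := fun n => Function.iterate_fixed hμ' n
      simp only [heq, hiter]
      exact tendsto_const_nhds
    exact eq_of_dist_eq_zero (tendsto_nhds_unique h1 (key μ' μstar))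
end
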